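/- arXiv:2012.06105 — 4 statements merged into one kernel-verified Lean document; each statement's English description precedes it below -/
import Mathlib

section
/- Let p be an odd prime, m an odd positive integer, and let Q : F_{p^m} → F_p be a quadratic form over F_p (F_{p^m} viewed as an F_p-vector space) of rank m, i.e. the associated bilinear form B(x,z) = Q(x+z) − Q(x) − Q(z) is nondegenerate. For b ∈ F_{p^m} and c ∈ F_p set N_{b,c} = #{x ∈ F_{p^m} : Q(x) + Tr(bx) = c}. Then, as (b,c) ranges over F_{p^m} × F_p: N_{b,c} = p^{m−1} for exactly p^m pairs (b,c); N_{b,c} = p^{m−1} − p^{(m−1)/2} for exactly (1/2)(p−1)p^m pairs; and N_{b,c} = p^{m−1} + p^{(m−1)/2} for exactly (1/2)(p−1)p^m pairs. -/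
noncomputable section
open scoped Classical
open Finset

section Tools
variable (p : ℕ) [Fact p.Prime]

local notation "η" => quadraticChar (ZMod p)

lemma rc2 (hp2 : p ≠ 2) : ringChar (ZMod p) ≠ 2 := by
  rw [ZMod.ringChar_zmod_n]; exact hp2

lemma eta_inv (a : ZMod p) : η a⁻¹ = η a := by
  by_cases ha : a = 0
  · simp [ha]
  · have h1 : η a⁻¹ * η a = 1 := by
      rw [← map_mul, inv_mul_cancel₀ ha, map_one]
    rcases quadraticChar_dichotomy ha with h | h <;> rcases quadraticChar_dichotomy (inv_ne_zero ha) with h' | h' <;>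
      rw [h, h'] at h1 ⊢ <;> omega

lemma sum_eta_shift (hp2 : p ≠ 2) (a d : ZMod p) (ha : a ≠ 0) : ∑ u : ZMod p, η (d - a * u) = 0 := by
  have := Fintype.sum_bijective (fun u : ZMod p => d - a * u)
    (by
      have : (fun u : ZMod p => d - a * u) = (fun v => d - v) ∘ (fun u => a * u) := rfl
      rw [this]
      exact (Equiv.subLeft d).bijective.comp (Equiv.mulLeft₀ a ha).bijective)
    (fun u => η (d - a * u)) (fun v => η v) (fun u => rfl)
  rw [this, quadraticChar_sum_zero (rc2 p hp2)]

lemma sum_eta_sq : ∑ t : ZMod p, η t * η t = (p : ℤ) - 1 := by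
  have h1 : ∀ t : ZMod p, η t * η t = if ¬ t = 0 then (1:ℤ) else 0 := by
    intro t
    by_cases ht : t = 0
    · simp [ht]
    · rcases quadraticChar_dichotomy ht with h | h <;> simp [h, ht]
  rw [Finset.sum_congr rfl fun t _ => h1 t, Finset.sum_boole]
  have h2 : (univ.filter fun t : ZMod p => ¬ t = 0) = univ.erase 0 := by
    ext t; simp [Finset.mem_erase, and_comm]
  rw [h2, Finset.card_erase_of_mem (mem_univ _), Finset.card_univ, ZMod.card]
  have hp1 : 1 ≤ p := (Fact.out : p.Prime).one_lt.le
  push_cast [Nat.cast_sub hp1]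
  ring

lemma jacobi (hp2 : p ≠ 2) (d : ZMod p) :
    ∑ t : ZMod p, η t * η (d - t) = if d = 0 then ((p : ℤ) - 1) * η (-1) else -η (-1) := by
  have rc : ringChar (ZMod p) ≠ 2 := by rw [ZMod.ringChar_zmod_n]; exact hp2
  by_cases hd : d = 0
  · subst hd
    simp only [if_pos rfl, zero_sub]
    have h1 : ∀ t : ZMod p, η t * η (-t) = η t * η t * η (-1) := by
      intro t
      have : (-t : ZMod p) = -1 * t := by ring
      rw [this, map_mul]; ring
    calc ∑ t : ZMod p, η t * η (-t) = ∑ t : ZMod p, η t * η t * η (-1) :=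
          Finset.sum_congr rfl fun t _ => h1 t
      _ = (∑ t : ZMod p, η t * η t) * η (-1) := by rw [← Finset.sum_mul]
      _ = ((p:ℤ) - 1) * η (-1) := by rw [sum_eta_sq]
  · rw [if_neg hd]
    have h0 : ∑ t : ZMod p, η t * η (d - t)
        = ∑ t ∈ univ.erase (0 : ZMod p), η t * η (d - t) := by
      rw [← Finset.add_sum_erase _ _ (mem_univ (0 : ZMod p))]
      simp
    have h1 : ∑ t ∈ univ.erase (0 : ZMod p), η t * η (d - t)
        = ∑ s ∈ univ.erase (-1 : ZMod p), η s := by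
      apply Finset.sum_nbij' (fun t => d * t⁻¹ - 1) (fun s => d * (s + 1)⁻¹)
      · intro t ht
        simp only [mem_erase, mem_univ, and_true] at ht ⊢
        intro h
        apply hd
        have : d * t⁻¹ = 0 := by linear_combination h
        rcases mul_eq_zero.1 this with h' | h'
        · exact h'
        · exact absurd (inv_eq_zero.1 h') ht
      · intro s hs
        simp only [mem_erase, mem_univ, and_true] at hs ⊢
        have h1 : s + 1 ≠ 0 := fun h => hs (by linear_combination h)
        exact mul_ne_zero hd (inv_ne_zero h1)
      · intro t ht
        simp only [mem_erase, mem_univ, and_true] at ht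
        field_simp
        rw [sub_add_cancel, div_self hd]
      · intro s hs
        simp only [mem_erase, mem_univ, and_true] at hs
        have h1 : s + 1 ≠ 0 := fun h => hs (by linear_combination h)
        field_simp
        ring
      · intro t ht
        simp only [mem_erase, mem_univ, and_true] at ht
        have : d * t⁻¹ - 1 = t⁻¹ * (d - t) := by field_simp
        rw [this, map_mul, eta_inv]
    have h2 : ∑ s ∈ univ.erase (-1 : ZMod p), η s = -η (-1) := by
      have := Finset.add_sum_erase _ (fun s : ZMod p => η s) (mem_univ (-1 : ZMod p))
      rw [quadraticChar_sum_zero rc] at this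
      linarith
    rw [h0, h1, h2]

lemma sum_sq_fiber (hp2 : p ≠ 2) (g : ZMod p → ℤ) :
    ∑ x : ZMod p, g (x ^ 2) = ∑ u : ZMod p, (1 + η u) * g u := by
  have rc : ringChar (ZMod p) ≠ 2 := by rw [ZMod.ringChar_zmod_n]; exact hp2
  rw [← Finset.sum_fiberwise univ (fun x : ZMod p => x ^ 2) (fun x => g (x ^ 2))]
  apply Finset.sum_congr rfl
  intro u _
  have h1 : ∑ x ∈ univ.filter (fun x : ZMod p => x ^ 2 = u), g (x ^ 2)
      = ∑ x ∈ univ.filter (fun x : ZMod p => x ^ 2 = u), g u := by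
    apply Finset.sum_congr rfl
    intro x hx
    rw [(Finset.mem_filter.1 hx).2]
  rw [h1, Finset.sum_const, nsmul_eq_mul]
  congr 1
  have h2 : (univ.filter fun x : ZMod p => x ^ 2 = u) = {x : ZMod p | x ^ 2 = u}.toFinset := by
    ext x; simp
  rw [h2, quadraticChar_card_sqrts rc u]
  ring

/-- count of solutions of a diagonal form -/
def cnt (n : ℕ) (w : Fin n → ZMod p) (c : ZMod p) : ℕ :=
  Nat.card {x : Fin n → ZMod p // ∑ i, w i * (x i * x i) = c}

lemma cnt_zero (w : Fin 0 → ZMod p) (c : ZMod p) : cnt p 0 w c = if c = 0 then 1 else 0 := by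
  unfold cnt
  by_cases hc : c = 0
  · rw [if_pos hc]
    have e : {x : Fin 0 → ZMod p // ∑ i, w i * (x i * x i) = c}
        ≃ (Fin 0 → ZMod p) := Equiv.subtypeUnivEquiv (by intro x; simp [hc])
    rw [Nat.card_congr e]
    simp [Nat.card_eq_fintype_card]
  · rw [if_neg hc]
    have he : IsEmpty {x : Fin 0 → ZMod p // ∑ i, w i * (x i * x i) = c} := by
      constructor; rintro ⟨x, hx⟩; simp at hx; exact hc hx.symm
    exact Nat.card_of_isEmpty

lemma cnt_succ (n : ℕ) (w : Fin (n+1) → ZMod p) (c : ZMod p) :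
    cnt p (n+1) w c = ∑ u : ZMod p, cnt p n (w ∘ Fin.succ) (c - w 0 * (u * u)) := by
  unfold cnt
  have e1 : {q : ZMod p × (Fin n → ZMod p) //
          ∑ i, (w ∘ Fin.succ) i * (q.2 i * q.2 i) = c - w 0 * (q.1 * q.1)}
      ≃ {x : Fin (n+1) → ZMod p // ∑ i, w i * (x i * x i) = c} := by
    refine (Fin.consEquiv (fun _ : Fin (n+1) => ZMod p)).subtypeEquiv ?_
    rintro ⟨a, y⟩
    simp only [Fin.consEquiv_apply, Fin.sum_univ_succ, Fin.cons_zero, Fin.cons_succ,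
      Function.comp, eq_sub_iff_add_eq]
    constructor <;> intro h <;> linear_combination h
  have e2 : {q : ZMod p × (Fin n → ZMod p) //
          ∑ i, (w ∘ Fin.succ) i * (q.2 i * q.2 i) = c - w 0 * (q.1 * q.1)}
      ≃ Σ u : ZMod p, {y : Fin n → ZMod p //
          ∑ i, (w ∘ Fin.succ) i * (y i * y i) = c - w 0 * (u * u)} :=
    Equiv.subtypeProdEquivSigmaSubtype
      (fun (u : ZMod p) (y : Fin n → ZMod p) =>
        ∑ i, (w ∘ Fin.succ) i * (y i * y i) = c - w 0 * (u * u))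
  rw [← Nat.card_congr e1, Nat.card_congr e2, Nat.card_eq_fintype_card, Fintype.card_sigma]
  apply Finset.sum_congr rfl
  intro u _
  rw [Nat.card_eq_fintype_card]

lemma cond_iff (a c u : ZMod p) (ha : a ≠ 0) : c - a * u = 0 ↔ u = a⁻¹ * c := by
  constructor
  · intro h
    field_simp
    linear_combination -h
  · intro h
    subst h
    field_simp
    ring

lemma sum_eta_eta (hp2 : p ≠ 2) (a c : ZMod p) (ha : a ≠ 0) :
    ∑ u : ZMod p, η u * η (c - a * u)
      = η a * (if c = 0 then ((p : ℤ) - 1) * η (-1) else -η (-1)) := by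
  have h1 := Fintype.sum_bijective (fun u : ZMod p => a * u)
    (Equiv.mulLeft₀ a ha).bijective
    (fun u : ZMod p => η u * η (c - a * u))
    (fun v : ZMod p => η (a⁻¹ * v) * η (c - v))
    (by intro u; simp [inv_mul_cancel_left₀ ha])
  rw [h1]
  have h2 : ∀ v : ZMod p, η (a⁻¹ * v) * η (c - v) = η a * (η v * η (c - v)) := by
    intro v
    rw [map_mul, eta_inv]
    ring
  rw [Finset.sum_congr rfl fun v _ => h2 v, ← Finset.mul_sum, jacobi p hp2 c]

lemma sum_ite_zero (a c : ZMod p) (ha : a ≠ 0) :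
    ∑ u : ZMod p, (if c - a * u = 0 then ((p : ℤ) - 1) else -1) = 0 := by
  have h1 : ∀ u : ZMod p, (if c - a * u = 0 then ((p : ℤ) - 1) else -1)
      = -1 + (if u = a⁻¹ * c then (p : ℤ) else 0) := by
    intro u
    by_cases h : u = a⁻¹ * c
    · have h' : c - a * u = 0 := (cond_iff p a c u ha).2 h
      rw [if_pos h', if_pos h]; ring
    · have h' : c - a * u ≠ 0 := fun hh => h ((cond_iff p a c u ha).1 hh)
      rw [if_neg h', if_neg h]; ring
  rw [Finset.sum_congr rfl fun u _ => h1 u, Finset.sum_add_distrib, Finset.sum_const,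
    Finset.sum_ite_eq' univ (a⁻¹ * c) (fun _ => (p : ℤ)), if_pos (mem_univ _),
    Finset.card_univ, ZMod.card]
  simp

lemma sum_eta_ite (hp2 : p ≠ 2) (a c : ZMod p) (ha : a ≠ 0) :
    ∑ u : ZMod p, η u * (if c - a * u = 0 then ((p : ℤ) - 1) else -1)
      = η a * η c * (p : ℤ) := by
  have h1 : ∀ u : ZMod p, η u * (if c - a * u = 0 then ((p : ℤ) - 1) else -1)
      = -(η u) + (if u = a⁻¹ * c then (η u : ℤ) * (p : ℤ) else 0) := by
    intro u
    by_cases h : u = a⁻¹ * c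
    · have h' : c - a * u = 0 := (cond_iff p a c u ha).2 h
      rw [if_pos h', if_pos h]; ring
    · have h' : c - a * u ≠ 0 := fun hh => h ((cond_iff p a c u ha).1 hh)
      rw [if_neg h', if_neg h]; ring
  rw [Finset.sum_congr rfl fun u _ => h1 u, Finset.sum_add_distrib, Finset.sum_neg_distrib,
    quadraticChar_sum_zero (rc2 p hp2),
    Finset.sum_ite_eq' univ (a⁻¹ * c) (fun u => (η u : ℤ) * (p : ℤ)), if_pos (mem_univ _)]
  rw [map_mul, eta_inv]
  ring

lemma main_count (hp2 : p ≠ 2) :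
    ∀ (n : ℕ) (w : Fin (n+1) → ZMod p), (∀ i, w i ≠ 0) →
    ∃ ε : ℤ, (ε = 1 ∨ ε = -1) ∧ ∀ c : ZMod p,
      (cnt p (n+1) w c : ℤ) = (p:ℤ)^n
        + ε * (if Even n then (η c) else if c = 0 then (p:ℤ) - 1 else -1) * (p:ℤ)^(n/2) := by
  intro n
  induction n with
  | zero =>
    intro w hw
    refine ⟨η (w 0), quadraticChar_dichotomy (hw 0), ?_⟩
    intro c
    have step1 : (cnt p 1 w c : ℤ)
        = ∑ u : ZMod p, (if c - w 0 * u ^ 2 = 0 then (1:ℤ) else 0) := by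
      rw [cnt_succ]
      push_cast
      apply Finset.sum_congr rfl
      intro u _
      rw [cnt_zero, pow_two]
      split <;> simp
    have step2 : ∑ u : ZMod p, (if c - w 0 * u ^ 2 = 0 then (1:ℤ) else 0)
        = ∑ v : ZMod p, (1 + η v) * (if c - w 0 * v = 0 then (1:ℤ) else 0) :=
      sum_sq_fiber p hp2 (fun v => if c - w 0 * v = 0 then (1:ℤ) else 0)
    have step3 : ∀ v : ZMod p, (1 + η v) * (if c - w 0 * v = 0 then (1:ℤ) else 0)
        = if v = (w 0)⁻¹ * c then 1 + η (w 0) * η c else 0 := by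
      intro v
      by_cases h : v = (w 0)⁻¹ * c
      · have h' : c - w 0 * v = 0 := (cond_iff p (w 0) c v (hw 0)).2 h
        rw [if_pos h', if_pos h, h]
        rw [map_mul, eta_inv]
        ring
      · have h' : c - w 0 * v ≠ 0 := fun hh => h ((cond_iff p (w 0) c v (hw 0)).1 hh)
        rw [if_neg h', if_neg h]
        ring
    rw [step1, step2, Finset.sum_congr rfl fun v _ => step3 v,
      Finset.sum_ite_eq' univ ((w 0)⁻¹ * c) (fun _ => 1 + η (w 0) * η c), if_pos (mem_univ _)]
    simp
  | succ n IH =>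
    intro w hw
    obtain ⟨ε, hε, hf⟩ := IH (w ∘ Fin.succ) (fun i => hw i.succ)
    have hw0 : w 0 ≠ 0 := hw 0
    set X : ZMod p → ℤ :=
      fun d => if Even n then (η d) else if d = 0 then (p:ℤ) - 1 else -1 with hX
    have key : ∀ c : ZMod p, (cnt p (n+2) w c : ℤ)
        = ∑ v : ZMod p, (1 + η v) * ((p:ℤ)^n + ε * X (c - w 0 * v) * (p:ℤ)^(n/2)) := by
      intro c
      have step1 : (cnt p (n+2) w c : ℤ)
          = ∑ u : ZMod p, ((p:ℤ)^n + ε * X (c - w 0 * u ^ 2) * (p:ℤ)^(n/2)) := by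
        rw [cnt_succ]
        push_cast
        apply Finset.sum_congr rfl
        intro u _
        rw [pow_two, hf]
      rw [step1]
      exact sum_sq_fiber p hp2 (fun v => (p:ℤ)^n + ε * X (c - w 0 * v) * (p:ℤ)^(n/2))
    -- expand the sum
    have expand : ∀ c : ZMod p,
        ∑ v : ZMod p, (1 + η v) * ((p:ℤ)^n + ε * X (c - w 0 * v) * (p:ℤ)^(n/2))
        = (p:ℤ)^(n+1)
          + ε * (p:ℤ)^(n/2) * (∑ v : ZMod p, X (c - w 0 * v))
          + (p:ℤ)^n * (∑ v : ZMod p, η v)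
          + ε * (p:ℤ)^(n/2) * (∑ v : ZMod p, (η v) * X (c - w 0 * v)) := by
      intro c
      have : ∀ v : ZMod p, (1 + η v) * ((p:ℤ)^n + ε * X (c - w 0 * v) * (p:ℤ)^(n/2))
          = (p:ℤ)^n + ε * (p:ℤ)^(n/2) * X (c - w 0 * v)
            + (p:ℤ)^n * η v + ε * (p:ℤ)^(n/2) * ((η v) * X (c - w 0 * v)) := by
        intro v; ring
      rw [Finset.sum_congr rfl fun v _ => this v]
      rw [Finset.sum_add_distrib, Finset.sum_add_distrib, Finset.sum_add_distrib,
        ← Finset.mul_sum, ← Finset.mul_sum, ← Finset.mul_sum,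
        Finset.sum_const, Finset.card_univ, ZMod.card, nsmul_eq_mul]
      ring
    have hsum0 : (∑ v : ZMod p, η v) = 0 := quadraticChar_sum_zero (rc2 p hp2)
    rcases Nat.even_or_odd n with hn | hn
    · -- n even, n+1 odd
      have hXeta : X = fun d => η d := by funext d; exact if_pos hn
      have hodd : ¬ Even (n+1) := by simp [Nat.even_add_one, hn]
      have hm1 : (-1 : ZMod p) ≠ 0 := by simp
      refine ⟨ε * η (w 0) * η (-1), ?_, ?_⟩
      · rcases hε with h | h <;> rcases quadraticChar_dichotomy hw0 with h1 | h1 <;>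
          rcases quadraticChar_dichotomy hm1 with h2 | h2 <;>
          rw [h, h1, h2] <;> norm_num
      · intro c
        rw [key c, expand c, hsum0, hXeta]
        rw [sum_eta_shift p hp2 (w 0) c hw0, sum_eta_eta p hp2 (w 0) c hw0]
        rw [if_neg hodd]
        have hdiv : (n+1)/2 = n/2 := by obtain ⟨k, hk⟩ := hn; omega
        rw [hdiv]
        by_cases hc : c = 0
        · simp only [if_pos hc]; ring
        · simp only [if_neg hc]; ring
    · -- n odd, n+1 even
      have hXite : X = fun d => if d = 0 then (p:ℤ) - 1 else -1 := by
        funext d; exact if_neg (Nat.not_even_iff_odd.2 hn)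
      have heven : Even (n+1) := by simp [Nat.even_add_one, Nat.not_even_iff_odd.2 hn]
      refine ⟨ε * η (w 0), ?_, ?_⟩
      · rcases hε with h | h <;> rcases quadraticChar_dichotomy hw0 with h1 | h1 <;>
          rw [h, h1] <;> norm_num
      · intro c
        rw [key c, expand c, hsum0, hXite]
        rw [sum_ite_zero p (w 0) c hw0, sum_eta_ite p hp2 (w 0) c hw0]
        rw [if_pos heven]
        have hdiv : (n+1)/2 = n/2 + 1 := by obtain ⟨k, hk⟩ := hn; omega
        rw [hdiv, pow_succ]
        ring

lemma card_eta (hp2 : p ≠ 2) (s : ℤ) (hs : s = 1 ∨ s = -1) :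
    2 * ((univ.filter fun c : ZMod p => η c = s).card : ℤ) = (p : ℤ) - 1 := by
  have h1 : ∑ c : ZMod p, (η c : ℤ)
      = ∑ c : ZMod p, ((if η c = 1 then (1:ℤ) else 0) - (if η c = -1 then (1:ℤ) else 0)) := by
    apply Finset.sum_congr rfl
    intro c _
    by_cases hc : c = 0
    · simp [hc]
    · rcases quadraticChar_dichotomy hc with h | h <;> rw [h] <;> norm_num
  have h2 : ∑ c : ZMod p, (η c : ℤ) * η c
      = ∑ c : ZMod p, ((if η c = 1 then (1:ℤ) else 0) + (if η c = -1 then (1:ℤ) else 0)) := by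
    apply Finset.sum_congr rfl
    intro c _
    by_cases hc : c = 0
    · simp [hc]
    · rcases quadraticChar_dichotomy hc with h | h <;> rw [h] <;> norm_num
  rw [quadraticChar_sum_zero (rc2 p hp2)] at h1
  rw [sum_eta_sq] at h2
  rw [Finset.sum_sub_distrib, Finset.sum_boole, Finset.sum_boole] at h1
  rw [Finset.sum_add_distrib, Finset.sum_boole, Finset.sum_boole] at h2
  rcases hs with rfl | rfl <;> [linarith; linarith]

def inv2 (hp2 : p ≠ 2) : Invertible (2 : ZMod p) := by
  apply invertibleOfNonzero
  have h : ((2:ℕ) : ZMod p) ≠ 0 := by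
    rw [Ne, ZMod.natCast_eq_zero_iff]
    intro h
    have h1 := Nat.le_of_dvd (by norm_num) h
    have h2 := (Fact.out : p.Prime).two_le
    omega
  simpa using h

lemma nQ_formula (hp2 : p ≠ 2) (k : ℕ)
    (Q : QuadraticForm (ZMod p) (GaloisField p (k+1)))
    (hrank' : ∀ x : GaloisField p (k+1), (∀ z, QuadraticMap.polar Q x z = 0) → x = 0) :
    ∃ ε : ℤ, (ε = 1 ∨ ε = -1) ∧ ∀ c : ZMod p,
      (Nat.card {x : GaloisField p (k+1) // Q x = c} : ℤ)
        = (p:ℤ)^k + ε * (if Even k then (η c) else if c = 0 then (p:ℤ) - 1 else -1)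
            * (p:ℤ)^(k/2) := by
  haveI := inv2 p hp2
  obtain ⟨w, ⟨e⟩⟩ := QuadraticForm.equivalent_weightedSumSquares Q
  have hfin : Module.finrank (ZMod p) (GaloisField p (k+1)) = k + 1 :=
    GaloisField.finrank p (Nat.succ_ne_zero k)
  set l := e.toLinearEquiv with hl
  have he : ∀ v : GaloisField p (k+1), Q v = ∑ j, w j * (l v j * l v j) := by
    intro v
    rw [← e.map_app v, QuadraticMap.weightedSumSquares_apply]
    apply Finset.sum_congr rfl
    intro j _
    rw [smul_eq_mul]
    rfl
  set w' : Fin (k+1) → ZMod p := fun i => w (Fin.cast hfin.symm i) with hw'def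
  have hcnt : ∀ c, Nat.card {x : GaloisField p (k+1) // Q x = c} = cnt p (k+1) w' c := by
    intro c
    apply Nat.card_congr
    refine Equiv.trans
      (Equiv.subtypeEquiv (p := fun x => Q x = c)
        (q := fun y : Fin (Module.finrank (ZMod p) (GaloisField p (k+1))) → ZMod p =>
          ∑ j, w j * (y j * y j) = c) l.toEquiv ?_)
      (Equiv.subtypeEquiv
        (q := fun y : Fin (k+1) → ZMod p => ∑ i, w' i * (y i * y i) = c)
        (Equiv.arrowCongr (finCongr hfin) (Equiv.refl (ZMod p))) ?_)
    · intro v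
      show Q v = c ↔ _
      rw [he v]
      rfl
    · intro y
      show (∑ j, w j * (y j * y j) = c) ↔ _
      have hsum : ∑ j, w j * (y j * y j)
          = ∑ i, w' i * ((Equiv.arrowCongr (finCongr hfin) (Equiv.refl (ZMod p)) y) i
              * (Equiv.arrowCongr (finCongr hfin) (Equiv.refl (ZMod p)) y) i) := by
        apply Fintype.sum_equiv (finCongr hfin)
        intro j
        simp [hw'def, Equiv.arrowCongr]
      rw [hsum]
  have hw : ∀ i, w' i ≠ 0 := by
    intro i hzero
    set j0 : Fin (Module.finrank (ZMod p) (GaloisField p (k+1))) := Fin.cast hfin.symm i with hj0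
    set y : Fin (Module.finrank (ZMod p) (GaloisField p (k+1))) → ZMod p := Pi.single j0 1 with hy
    set x : GaloisField p (k+1) := l.symm y with hx
    have hlx : l x = y := l.apply_symm_apply y
    have hpol : ∀ z, QuadraticMap.polar Q x z = 0 := by
      intro z
      have : QuadraticMap.polar Q x z = Q (x + z) - Q x - Q z := rfl
      rw [this, he, he, he, map_add, hlx]
      rw [← Finset.sum_sub_distrib, ← Finset.sum_sub_distrib]
      apply Finset.sum_eq_zero
      intro j _
      by_cases hj : j = j0
      · subst hj
        have : w j0 = 0 := hzero
        simp [Pi.add_apply, this]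
      · have : y j = 0 := Pi.single_eq_of_ne hj 1
        simp [Pi.add_apply, this]
    have hx0 : x = 0 := hrank' x hpol
    have : y = 0 := by rw [← hlx, hx0, map_zero]
    have h1 : (1 : ZMod p) = 0 := by
      have := congrFun this j0
      rwa [hy, Pi.single_eq_same] at this
    exact one_ne_zero h1
  obtain ⟨ε, hε, hf⟩ := main_count p hp2 k w' hw
  exact ⟨ε, hε, fun c => by rw [hcnt c]; exact hf c⟩

end Tools

/-- The absolute trace map from `F_{p^m}` to `F_p`. -/
def tr (p m : ℕ) [Fact p.Prime] (x : GaloisField p m) : ZMod p :=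
  Algebra.trace (ZMod p) (GaloisField p m) x

/-- `N_{b,c} = #{x ∈ F_{p^m} : Q(x) + Tr(bx) = c}`. -/
def Nbc (p m : ℕ) [Fact p.Prime] (Q : QuadraticForm (ZMod p) (GaloisField p m))
    (b : GaloisField p m) (c : ZMod p) : ℕ :=
  Nat.card {x : GaloisField p m // Q x + tr p m (b * x) = c}

/-- For `p` an odd prime, `m` odd, and a quadratic form `Q` of rank `m`
(nondegenerate polar form) on `F_{p^m}` over `F_p`, as `(b,c)` ranges over
`F_{p^m} × F_p`, the count `N_{b,c}` equals `p^{m-1}` exactly `p^m` times, and equals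
`p^{m-1} ∓ p^{(m-1)/2}` exactly `(1/2)(p-1)p^m` times each. -/
theorem stmt_1 (p m : ℕ) [Fact p.Prime] (hp : Odd p) (hm : Odd m)
    (Q : QuadraticForm (ZMod p) (GaloisField p m))
    (hrank : ∀ x : GaloisField p m, (∀ z, Q (x + z) - Q x - Q z = 0) → x = 0) :
    Nat.card {bc : GaloisField p m × ZMod p //
        (Nbc p m Q bc.1 bc.2 : ℤ) = (p : ℤ) ^ (m - 1)} = p ^ m ∧
    2 * Nat.card {bc : GaloisField p m × ZMod p //
        (Nbc p m Q bc.1 bc.2 : ℤ) = (p : ℤ) ^ (m - 1) - (p : ℤ) ^ ((m - 1) / 2)}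
      = (p - 1) * p ^ m ∧
    2 * Nat.card {bc : GaloisField p m × ZMod p //
        (Nbc p m Q bc.1 bc.2 : ℤ) = (p : ℤ) ^ (m - 1) + (p : ℤ) ^ ((m - 1) / 2)}
      = (p - 1) * p ^ m := by
  have hm1 : m % 2 = 1 := Nat.odd_iff.1 hm
  obtain ⟨k, rfl⟩ : ∃ k, m = k + 1 := ⟨m - 1, by omega⟩
  have hk : Even k := by rcases hm with ⟨t, ht⟩; exact ⟨t, by omega⟩
  have hp2 : p ≠ 2 := by rcases hp with ⟨t, ht⟩; omega
  have hppos : (0:ℤ) < (p:ℤ)^(k/2) := by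
    have := (Fact.out : p.Prime).two_le
    positivity
  have hrank' : ∀ x : GaloisField p (k+1),
      (∀ z, QuadraticMap.polar (⇑Q) x z = 0) → x = 0 := fun x h => hrank x h
  obtain ⟨ε, hε, hnQ⟩ := nQ_formula p hp2 k Q hrank'
  simp only [if_pos hk] at hnQ
  -- completing the square
  have hinj : Function.Injective
      ⇑(QuadraticMap.polarBilin Q :
        GaloisField p (k+1) →ₗ[ZMod p] Module.Dual (ZMod p) (GaloisField p (k+1))) := by
    refine (injective_iff_map_eq_zero _).2 ?_
    intro x hx
    refine hrank' x (fun z => ?_)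
    rw [← QuadraticMap.polarBilin_apply_apply, hx]
    rfl
  have hsurj : Function.Surjective
      ⇑(QuadraticMap.polarBilin Q :
        GaloisField p (k+1) →ₗ[ZMod p] Module.Dual (ZMod p) (GaloisField p (k+1))) :=
    (LinearMap.injective_iff_surjective_of_finrank_eq_finrank
      Subspace.dual_finrank_eq.symm).1 hinj
  choose A hA using fun b : GaloisField p (k+1) =>
    hsurj ((Algebra.trace (ZMod p) (GaloisField p (k+1))).comp
      (LinearMap.mulLeft (ZMod p) b))
  have hNbc : ∀ (b : GaloisField p (k+1)) (c : ZMod p),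
      Nbc p (k+1) Q b c = Nat.card {x : GaloisField p (k+1) // Q x = c + Q (A b)} := by
    intro b c
    apply Nat.card_congr
    refine Equiv.subtypeEquiv (Equiv.addRight (A b)) ?_
    intro x
    have h1 : QuadraticMap.polar (⇑Q) (A b) x = tr p (k+1) (b * x) := by
      have := congrArg (fun f => f x) (hA b)
      simpa [QuadraticMap.polarBilin_apply_apply, tr] using this
    have h2 : QuadraticMap.polar (⇑Q) (A b) x = Q (A b + x) - Q (A b) - Q x := rfl
    show Q x + tr p (k+1) (b * x) = c ↔ Q (x + A b) = c + Q (A b)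
    rw [add_comm x (A b)]
    constructor
    · intro h
      linear_combination h - h2 + h1
    · intro h
      linear_combination h + h2 - h1
  -- reduce the pair counting to counting over c
  have hpair : ∀ v : ℤ,
      Nat.card {bc : GaloisField p (k+1) × ZMod p // (Nbc p (k+1) Q bc.1 bc.2 : ℤ) = v}
      = p^(k+1) * Nat.card {c : ZMod p //
          ((Nat.card {x : GaloisField p (k+1) // Q x = c} : ℕ) : ℤ) = v} := by
    intro v
    have e1 : {bc : GaloisField p (k+1) × ZMod p // (Nbc p (k+1) Q bc.1 bc.2 : ℤ) = v}
        ≃ {bc : GaloisField p (k+1) × ZMod p //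
            ((Nat.card {x : GaloisField p (k+1) // Q x = bc.2} : ℕ) : ℤ) = v} := by
      refine Equiv.subtypeEquiv
        (Equiv.mk (fun bc => (bc.1, bc.2 + Q (A bc.1))) (fun bc => (bc.1, bc.2 - Q (A bc.1)))
          (fun bc => by simp) (fun bc => by simp)) ?_
      intro bc
      rw [hNbc bc.1 bc.2]
      exact Iff.rfl
    have e2 : {bc : GaloisField p (k+1) × ZMod p //
            ((Nat.card {x : GaloisField p (k+1) // Q x = bc.2} : ℕ) : ℤ) = v}
        ≃ GaloisField p (k+1) × {c : ZMod p //
            ((Nat.card {x : GaloisField p (k+1) // Q x = c} : ℕ) : ℤ) = v} :=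
      Equiv.mk (fun q => (q.1.1, ⟨q.1.2, q.2⟩)) (fun q => ⟨(q.1, q.2.1), q.2.2⟩)
        (fun q => rfl) (fun q => rfl)
    rw [Nat.card_congr e1, Nat.card_congr e2, Nat.card_prod,
      GaloisField.card p (k+1) (Nat.succ_ne_zero k)]
  simp only [Nat.add_sub_cancel]
  refine ⟨?_, ?_, ?_⟩
  · -- value p^k
    rw [hpair ((p:ℤ)^k)]
    have hcond : ∀ c : ZMod p,
        (((Nat.card {x : GaloisField p (k+1) // Q x = c} : ℕ) : ℤ) = (p:ℤ)^k) ↔ c = 0 := by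
      intro c
      rw [hnQ c]
      constructor
      · intro h
        have h2 : (ε * quadraticChar (ZMod p) c) * (p:ℤ)^(k/2) = 0 := by linarith
        rcases mul_eq_zero.1 h2 with h3 | h3
        · rcases mul_eq_zero.1 h3 with h4 | h4
          · rcases hε with rfl | rfl <;> norm_num at h4
          · exact quadraticChar_eq_zero_iff.1 h4
        · exact absurd h3 (ne_of_gt hppos)
      · rintro rfl
        rw [MulChar.map_zero]
        ring
    have e3 : {c : ZMod p //
        ((Nat.card {x : GaloisField p (k+1) // Q x = c} : ℕ) : ℤ) = (p:ℤ)^k}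
        ≃ {c : ZMod p // c = 0} := Equiv.subtypeEquiv (Equiv.refl _) (fun c => by
          rw [hcond c]; rfl)
    haveI : Unique {c : ZMod p // c = 0} := ⟨⟨⟨0, rfl⟩⟩, by rintro ⟨c, rfl⟩; rfl⟩
    rw [Nat.card_congr e3, Nat.card_unique, mul_one]
  · -- value p^k - p^(k/2)
    rw [hpair ((p:ℤ)^k - (p:ℤ)^(k/2))]
    have hcond : ∀ c : ZMod p,
        (((Nat.card {x : GaloisField p (k+1) // Q x = c} : ℕ) : ℤ)
          = (p:ℤ)^k - (p:ℤ)^(k/2)) ↔ quadraticChar (ZMod p) c = -ε := by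
      intro c
      rw [hnQ c]
      constructor
      · intro h
        have h2 : (ε * quadraticChar (ZMod p) c + 1) * (p:ℤ)^(k/2) = 0 := by linarith
        rcases mul_eq_zero.1 h2 with h3 | h3
        · rcases hε with rfl | rfl <;> linarith
        · exact absurd h3 (ne_of_gt hppos)
      · intro h
        rw [h]
        rcases hε with rfl | rfl <;> ring
    have e3 : {c : ZMod p //
        ((Nat.card {x : GaloisField p (k+1) // Q x = c} : ℕ) : ℤ)
          = (p:ℤ)^k - (p:ℤ)^(k/2)}
        ≃ {c : ZMod p // quadraticChar (ZMod p) c = -ε} :=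
      Equiv.subtypeEquiv (Equiv.refl _) (fun c => by rw [hcond c]; rfl)
    rw [Nat.card_congr e3, Nat.card_eq_fintype_card, Fintype.card_subtype]
    have hcc := card_eta p hp2 (-ε) (by rcases hε with rfl | rfl <;> norm_num)
    have hcard : 2 * (univ.filter fun c : ZMod p => quadraticChar (ZMod p) c = -ε).card
        = p - 1 := by omega
    calc 2 * (p^(k+1) * (univ.filter fun c : ZMod p =>
            quadraticChar (ZMod p) c = -ε).card)
        = (2 * (univ.filter fun c : ZMod p =>
            quadraticChar (ZMod p) c = -ε).card) * p^(k+1) := by ring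
      _ = (p - 1) * p^(k+1) := by rw [hcard]
  · -- value p^k + p^(k/2)
    rw [hpair ((p:ℤ)^k + (p:ℤ)^(k/2))]
    have hcond : ∀ c : ZMod p,
        (((Nat.card {x : GaloisField p (k+1) // Q x = c} : ℕ) : ℤ)
          = (p:ℤ)^k + (p:ℤ)^(k/2)) ↔ quadraticChar (ZMod p) c = ε := by
      intro c
      rw [hnQ c]
      constructor
      · intro h
        have h2 : (ε * quadraticChar (ZMod p) c - 1) * (p:ℤ)^(k/2) = 0 := by linarith
        rcases mul_eq_zero.1 h2 with h3 | h3
        · rcases hε with rfl | rfl <;> linarith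
        · exact absurd h3 (ne_of_gt hppos)
      · intro h
        rw [h]
        rcases hε with rfl | rfl <;> ring
    have e3 : {c : ZMod p //
        ((Nat.card {x : GaloisField p (k+1) // Q x = c} : ℕ) : ℤ)
          = (p:ℤ)^k + (p:ℤ)^(k/2)}
        ≃ {c : ZMod p // quadraticChar (ZMod p) c = ε} :=
      Equiv.subtypeEquiv (Equiv.refl _) (fun c => by rw [hcond c]; rfl)
    rw [Nat.card_congr e3, Nat.card_eq_fintype_card, Fintype.card_subtype]
    have hcc := card_eta p hp2 ε hε
    have hcard : 2 * (univ.filter fun c : ZMod p => quadraticChar (ZMod p) c = ε).card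
        = p - 1 := by omega
    calc 2 * (p^(k+1) * (univ.filter fun c : ZMod p =>
            quadraticChar (ZMod p) c = ε).card)
        = (2 * (univ.filter fun c : ZMod p =>
            quadraticChar (ZMod p) c = ε).card) * p^(k+1) := by ring
      _ = (p - 1) * p^(k+1) := by rw [hcard]
end
end

section
/- Let p be an odd prime, m an odd positive integer, and let f : F_{p^m} → F_{p^m} be a PN-DO function. Then for every a ∈ F_{p^m} with a ≠ 0 and all b ∈ F_{p^m}, c ∈ F_p, the number #{x ∈ F_{p^m} : Tr(a f(x) + b x) + c = 0} lies in the set {p^{m−1}, p^{m−1} − p^{(m−1)/2}, p^{m−1} + p^{(m−1)/2}}. Consequently the codeword c(a,b,c) = ((Tr(a f(x)+bx)+c)_{x∈F_{p^m}}, Tr(a)) of length p^m+1 has Hamming weight (p−1)p^{m−1}+σ, (p−1)p^{m−1}+p^{(m−1)/2}+σ, or (p−1)p^{m−1}−p^{(m−1)/2}+σ, where σ = 1 if Tr(a) ≠ 0 and σ = 0 if Tr(a) = 0. -/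
noncomputable section
open scoped Classical

noncomputable instance (p n : ℕ) [Fact p.Prime] : Fintype (GaloisField p n) :=
  Fintype.ofFinite _

/-- The codeword `c(a,b,c) = ((Tr(a f(x)+bx)+c)_{x∈F_{p^m}}, Tr(a))` of length `p^m + 1`;
the coordinate `none` is the last coordinate `Tr(a)`. -/
def fullWord (p m : ℕ) [Fact p.Prime] (f : GaloisField p m → GaloisField p m)
    (a b : GaloisField p m) (c : ZMod p) : Option (GaloisField p m) → ZMod p :=
  fun i => i.elim (tr p m a) fun x => tr p m (a * f x + b * x) + c

namespace Stmt3Aux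

open Finset

/-! ### Basic facts about the trace map -/

section TraceBasic

variable (p m : ℕ) [Fact p.Prime]

local notation "V" => GaloisField p m
local notation "F" => ZMod p

lemma tr_add (x y : V) : tr p m (x + y) = tr p m x + tr p m y := map_add _ x y

lemma tr_sub (x y : V) : tr p m (x - y) = tr p m x - tr p m y := map_sub _ x y

lemma tr_zero : tr p m (0 : V) = 0 := map_zero (Algebra.trace (ZMod p) (GaloisField p m))

lemma tr_am (c : F) (x : V) : tr p m (algebraMap F V c * x) = c * tr p m x := by
  have h := map_smul (Algebra.trace F V) c x
  simpa [Algebra.smul_def, smul_eq_mul, tr] using h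

lemma tr_nondeg {a : V} (ha : a ≠ 0) : ∃ x, tr p m (a * x) ≠ 0 := by
  have h := (traceForm_nondegenerate (ZMod p) (GaloisField p m)).1 a
  simp_rw [Algebra.traceForm_apply] at h
  by_contra! hf
  exact ha (h hf)

lemma tr_exists_ne : ∃ z : V, tr p m z ≠ 0 := by
  obtain ⟨x, hx⟩ := tr_nondeg p m (one_ne_zero (α := V))
  exact ⟨1 * x, hx⟩

lemma tr_surj (v : F) : ∃ x : V, tr p m x = v := by
  obtain ⟨z, hz⟩ := tr_exists_ne p m
  refine ⟨algebraMap F V (v * (tr p m z)⁻¹) * z, ?_⟩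
  rw [tr_am, mul_assoc, inv_mul_cancel₀ hz, mul_one]

lemma exists_tr_rep (φ : V →ₗ[F] F) : ∃ w : V, ∀ x, φ x = tr p m (w * x) := by
  have hnd := traceForm_nondegenerate (ZMod p) (GaloisField p m)
  refine ⟨(LinearMap.BilinForm.toDual _ hnd).symm φ, fun x => ?_⟩
  have h := LinearMap.BilinForm.toDual_def (B := Algebra.traceForm F V) hnd
    (m := (LinearMap.BilinForm.toDual _ hnd).symm φ) (n := x)
  rw [LinearEquiv.apply_symm_apply, Algebra.traceForm_apply] at h
  exact h

lemma card_V (hm : m ≠ 0) : (univ : Finset V).card = p ^ m := by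
  rw [Finset.card_univ, ← Nat.card_eq_fintype_card, GaloisField.card p m hm]

lemma card_tr_fiber (hm : m ≠ 0) (v : F) :
    (univ.filter fun x : V => tr p m x = v).card = p ^ (m - 1) := by
  have hconst : ∀ v : F, (univ.filter fun x : V => tr p m x = v).card
      = (univ.filter fun x : V => tr p m x = 0).card := by
    intro v
    obtain ⟨xv, hxv⟩ := tr_surj p m v
    refine Finset.card_nbij (fun x => x - xv) (fun x hx => ?_) (fun x _ y _ hxy => ?_) ?_
    · simp only [mem_coe, mem_filter, mem_univ, true_and] at hx ⊢
      rw [tr_sub, hx, hxv, sub_self]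
    · simpa using hxy
    · intro y hy
      simp only [Finset.coe_filter, Set.mem_setOf_eq, mem_univ, true_and] at hy
      refine ⟨y + xv, ?_, by ring⟩
      simp only [Finset.coe_filter, Set.mem_setOf_eq, mem_univ, true_and, mem_coe, mem_filter]
      rw [tr_add, hy, hxv, zero_add]
  have hsum : ∑ v : F, (univ.filter fun x : V => tr p m x = v).card = p ^ m := by
    rw [← card_V p m hm]
    exact (Finset.card_eq_sum_card_fiberwise (fun x _ => mem_univ (tr p m x))).symm
  have hsum2 : p * (univ.filter fun x : V => tr p m x = 0).card = p ^ m := by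
    rw [← hsum, Finset.sum_congr rfl fun v _ => hconst v, Finset.sum_const, smul_eq_mul,
      Finset.card_univ, ZMod.card]
  have hpow : p ^ m = p * p ^ (m - 1) := by
    conv_lhs => rw [show m = m - 1 + 1 from by omega]
    rw [pow_succ]
    ring
  rw [hconst v]
  have hp0 : 0 < p := (Fact.out : p.Prime).pos
  exact Nat.eq_of_mul_eq_mul_left hp0 (by rw [hsum2, hpow])

lemma card_fiber_bij (hm : m ≠ 0) {ψ : V → V} (hψ : Function.Bijective ψ) (v : F) :
    (univ.filter fun x : V => tr p m (ψ x) = v).card = p ^ (m - 1) := by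
  rw [← card_tr_fiber p m hm v]
  refine Finset.card_nbij ψ (fun x hx => ?_) (fun x _ y _ h => hψ.1 h) ?_
  · simp only [mem_coe, mem_filter, mem_univ, true_and] at hx ⊢
    exact hx
  · intro y hy
    obtain ⟨x, hx⟩ := hψ.2 y
    simp only [Finset.coe_filter, Set.mem_setOf_eq, mem_univ, true_and] at hy
    refine ⟨x, ?_, hx⟩
    simp only [Finset.coe_filter, Set.mem_setOf_eq, mem_univ, true_and, mem_coe, mem_filter]
    rw [hx]
    exact hy

end TraceBasic

/-! ### DO polynomial structure -/

section DO

variable {p m : ℕ} [Fact p.Prime] {f : GaloisField p m → GaloisField p m}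
  {δ : Fin m → Fin m → GaloisField p m}

local notation "V" => GaloisField p m
local notation "F" => ZMod p

lemma am_pow (c : F) (k : ℕ) : (algebraMap F V c) ^ p ^ k = algebraMap F V c := by
  rw [← map_pow, ZMod.pow_card_pow]

lemma am_pow_add (c : F) (i j : ℕ) :
    (algebraMap F V c) ^ (p ^ i + p ^ j) = (algebraMap F V c) ^ 2 := by
  rw [pow_add, am_pow, am_pow, sq]

variable (hDO : ∀ x, f x = ∑ i : Fin m, ∑ j : Fin m, δ i j * x ^ (p ^ (i : ℕ) + p ^ (j : ℕ)))
include hDO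

lemma D_eq (x y : V) :
    f (x + y) - f x - f y =
      ∑ i : Fin m, ∑ j : Fin m,
        δ i j * (x ^ p ^ (i : ℕ) * y ^ p ^ (j : ℕ) + y ^ p ^ (i : ℕ) * x ^ p ^ (j : ℕ)) := by
  rw [hDO (x + y), hDO x, hDO y]
  simp only [← Finset.sum_sub_distrib]
  refine Finset.sum_congr rfl fun i _ => Finset.sum_congr rfl fun j _ => ?_
  rw [pow_add (x + y), add_pow_char_pow, add_pow_char_pow]
  ring

lemma D_add_left (x x' y : V) :
    f (x + x' + y) - f (x + x') - f y
      = (f (x + y) - f x - f y) + (f (x' + y) - f x' - f y) := by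
  rw [D_eq hDO, D_eq hDO, D_eq hDO]
  simp only [← Finset.sum_add_distrib]
  refine Finset.sum_congr rfl fun i _ => Finset.sum_congr rfl fun j _ => ?_
  rw [add_pow_char_pow, add_pow_char_pow]
  ring

lemma D_add_right (x y y' : V) :
    f (x + (y + y')) - f x - f (y + y')
      = (f (x + y) - f x - f y) + (f (x + y') - f x - f y') := by
  rw [D_eq hDO, D_eq hDO, D_eq hDO]
  simp only [← Finset.sum_add_distrib]
  refine Finset.sum_congr rfl fun i _ => Finset.sum_congr rfl fun j _ => ?_
  rw [add_pow_char_pow, add_pow_char_pow]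
  ring

lemma D_smul_left (c : F) (x y : V) :
    f (algebraMap F V c * x + y) - f (algebraMap F V c * x) - f y
      = algebraMap F V c * (f (x + y) - f x - f y) := by
  rw [D_eq hDO, D_eq hDO, Finset.mul_sum]
  refine Finset.sum_congr rfl fun i _ => ?_
  rw [Finset.mul_sum]
  refine Finset.sum_congr rfl fun j _ => ?_
  rw [mul_pow, mul_pow, am_pow, am_pow]
  ring

lemma f_smul_sq (c : F) (x : V) :
    f (algebraMap F V c * x) = algebraMap F V c ^ 2 * f x := by
  rw [hDO (algebraMap F V c * x), hDO x, Finset.mul_sum]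
  refine Finset.sum_congr rfl fun i _ => ?_
  rw [Finset.mul_sum]
  refine Finset.sum_congr rfl fun j _ => ?_
  rw [mul_pow, am_pow_add]
  ring

end DO

/-! ### PN structure -/

section PN

variable {p m : ℕ} [Fact p.Prime] {f : GaloisField p m → GaloisField p m}

lemma phi_bij
    (hPN : ∀ a : GaloisField p m, a ≠ 0 → ∀ b : GaloisField p m,
      ∃! x : GaloisField p m, f (x + a) - f x = b)
    {u : GaloisField p m} (hu : u ≠ 0) :
    Function.Bijective fun x => f (x + u) - f x :=
  (Function.bijective_iff_existsUnique _).2 fun w => hPN u hu w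

end PN

/-! ### Integer arithmetic: the descent -/

lemma descent (p : ℕ) (hp : p.Prime) :
    ∀ t : ℕ, ∀ s d : ℤ, (p : ℤ) * s ^ 2 + d ^ 2 = 4 * (p : ℤ) ^ (2 * t) →
      ∃ S D : ℤ, s = (p : ℤ) ^ t * S ∧ d = (p : ℤ) ^ t * D ∧ (p : ℤ) * S ^ 2 + D ^ 2 = 4 := by
  intro t
  induction t with
  | zero =>
    intro s d h
    exact ⟨s, d, by simp, by simp, by simpa using h⟩
  | succ t ih =>
    intro s d h
    have hpZ : Prime (p : ℤ) := Nat.prime_iff_prime_int.mp hp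
    have hp0 : (p : ℤ) ≠ 0 := by exact_mod_cast hp.ne_zero
    have hd : (p : ℤ) ∣ d := by
      have hpow : (4 : ℤ) * (p : ℤ) ^ (2 * (t + 1)) = (p : ℤ) * (4 * (p : ℤ) ^ (2 * t + 1)) := by
        rw [show 2 * (t + 1) = (2 * t + 1) + 1 by omega, pow_succ]
        ring
      have h2 : (p : ℤ) ∣ d ^ 2 :=
        ⟨4 * (p : ℤ) ^ (2 * t + 1) - s ^ 2, by linear_combination h + hpow⟩
      exact hpZ.dvd_of_dvd_pow h2
    obtain ⟨d', rfl⟩ := hd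
    have hs : (p : ℤ) ∣ s := by
      have hpow : (4 : ℤ) * (p : ℤ) ^ (2 * (t + 1)) = (p : ℤ) ^ 2 * (4 * (p : ℤ) ^ (2 * t)) := by
        rw [show 2 * (t + 1) = 2 * t + 2 by omega, pow_add]
        ring
      have key : (p : ℤ) * s ^ 2 = (p : ℤ) * ((p : ℤ) * (4 * (p : ℤ) ^ (2 * t) - d' ^ 2)) := by
        linear_combination h + hpow
      have h2 : (p : ℤ) ∣ s ^ 2 := ⟨_, mul_left_cancel₀ hp0 key⟩
      exact hpZ.dvd_of_dvd_pow h2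
    obtain ⟨s', rfl⟩ := hs
    have h' : (p : ℤ) * s' ^ 2 + d' ^ 2 = 4 * (p : ℤ) ^ (2 * t) := by
      have hpow : (4 : ℤ) * (p : ℤ) ^ (2 * (t + 1)) = (p : ℤ) ^ 2 * (4 * (p : ℤ) ^ (2 * t)) := by
        rw [show 2 * (t + 1) = 2 * t + 2 by omega, pow_add]
        ring
      have key : (p : ℤ) ^ 2 * ((p : ℤ) * s' ^ 2 + d' ^ 2)
          = (p : ℤ) ^ 2 * (4 * (p : ℤ) ^ (2 * t)) := by
        linear_combination h + hpow
      exact mul_left_cancel₀ (pow_ne_zero 2 hp0) key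
    obtain ⟨S, D, h1, h2, h3⟩ := ih s' d' h'
    exact ⟨S, D, by rw [h1, pow_succ]; ring, by rw [h2, pow_succ]; ring, h3⟩

lemma small_case {p : ℕ} (hp : p.Prime) (hodd : Odd p) {S D : ℤ}
    (h : (p : ℤ) * S ^ 2 + D ^ 2 = 4) :
    (S = 0 ∧ (D = 2 ∨ D = -2)) ∨ ((p : ℤ) = 3 ∧ (S = 1 ∨ S = -1) ∧ (D = 1 ∨ D = -1)) := by
  have hp3 : 3 ≤ p := by
    rcases hodd with ⟨k, hk⟩
    have := hp.two_le
    omega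
  have hp3' : (3 : ℤ) ≤ (p : ℤ) := by exact_mod_cast hp3
  have hD2 : 0 ≤ D ^ 2 := sq_nonneg D
  by_cases hS : S = 0
  · left
    refine ⟨hS, ?_⟩
    have h4 : D ^ 2 = 4 := by rw [hS] at h; simpa using h
    have h5 : (D - 2) * (D + 2) = 0 := by linear_combination h4
    rcases mul_eq_zero.1 h5 with h6 | h6
    · exact Or.inl (by linarith)
    · exact Or.inr (by linarith)
  · right
    have hS1 : 1 ≤ S ^ 2 := by
      rcases lt_or_gt_of_ne hS with h6 | h6 <;> nlinarith
    have hp4 : (p : ℤ) ≤ 4 := by nlinarith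
    have hpeq : (p : ℤ) = 3 := by
      have h7 : p ≤ 4 := by exact_mod_cast hp4
      rcases hodd with ⟨k, hk⟩
      have : p = 3 := by omega
      exact_mod_cast this
    rw [hpeq] at h
    have hS2 : S ^ 2 = 1 := by nlinarith
    have hD2' : D ^ 2 = 1 := by nlinarith
    refine ⟨hpeq, ?_, ?_⟩
    · have h5 : (S - 1) * (S + 1) = 0 := by linear_combination hS2
      rcases mul_eq_zero.1 h5 with h6 | h6
      exacts [Or.inl (by linarith), Or.inr (by linarith)]
    · have h5 : (D - 1) * (D + 1) = 0 := by linear_combination hD2'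
      rcases mul_eq_zero.1 h5 with h6 | h6
      exacts [Or.inl (by linarith), Or.inr (by linarith)]

lemma key_arith {p : ℕ} (hp : p.Prime) (hodd : Odd p) (t : ℕ) {k a α β : ℤ}
    (hk : 2 * k = (p : ℤ) - 1)
    (E1 : a + k * (α + β) = 0)
    (E2 : a ^ 2 + k * (α ^ 2 + β ^ 2) = ((p : ℤ) - 1) * (p : ℤ) ^ (2 * t)) :
    (a = 0 ∨ a = (p : ℤ) ^ t ∨ a = -(p : ℤ) ^ t) ∧
    (α = 0 ∨ α = (p : ℤ) ^ t ∨ α = -(p : ℤ) ^ t) ∧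
    (β = 0 ∨ β = (p : ℤ) ^ t ∨ β = -(p : ℤ) ^ t) := by
  have hp3 : 3 ≤ p := by
    rcases hodd with ⟨j, hj⟩
    have := hp.two_le
    omega
  have hp3' : (3 : ℤ) ≤ (p : ℤ) := by exact_mod_cast hp3
  have hk1 : 1 ≤ k := by linarith
  have hkne : k ≠ 0 := by linarith
  have e2 : k * (k * (α + β) ^ 2 + (α ^ 2 + β ^ 2)) = k * (2 * (p : ℤ) ^ (2 * t)) := by
    linear_combination E2 - (a - k * (α + β)) * E1 - (p : ℤ) ^ (2 * t) * hk
  have e3 : k * (α + β) ^ 2 + (α ^ 2 + β ^ 2) = 2 * (p : ℤ) ^ (2 * t) :=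
    mul_left_cancel₀ hkne e2
  have hconv : (p : ℤ) * (α + β) ^ 2 + (α - β) ^ 2 = 4 * (p : ℤ) ^ (2 * t) := by
    linear_combination 2 * e3 - (α + β) ^ 2 * hk
  obtain ⟨S, D, hs, hd, hSD⟩ := descent p hp t (α + β) (α - β) hconv
  rcases small_case hp hodd hSD with ⟨hS0, hD⟩ | ⟨hpeq, hS, hD⟩
  · rw [hS0, mul_zero] at hs
    have ha : a = 0 := by
      rw [hs, mul_zero, add_zero] at E1
      exact E1
    rcases hD with h2 | h2 <;> rw [h2] at hd
    · exact ⟨Or.inl ha, Or.inr (Or.inl (by linarith)), Or.inr (Or.inr (by linarith))⟩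
    · exact ⟨Or.inl ha, Or.inr (Or.inr (by linarith)), Or.inr (Or.inl (by linarith))⟩
  · have hkone : k = 1 := by rw [hpeq] at hk; linarith
    rw [hkone, one_mul] at E1
    rcases hS with h1 | h1 <;> rw [h1] at hs <;> rcases hD with h2 | h2 <;> rw [h2] at hd
    · exact ⟨Or.inr (Or.inr (by linarith)), Or.inr (Or.inl (by linarith)), Or.inl (by linarith)⟩
    · exact ⟨Or.inr (Or.inr (by linarith)), Or.inl (by linarith), Or.inr (Or.inl (by linarith))⟩
    · exact ⟨Or.inr (Or.inl (by linarith)), Or.inl (by linarith), Or.inr (Or.inr (by linarith))⟩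
    · exact ⟨Or.inr (Or.inl (by linarith)), Or.inr (Or.inr (by linarith)), Or.inl (by linarith)⟩


/-! ### Square classes in `ZMod p` -/

section SquareClasses

variable {p : ℕ} [Fact p.Prime]

lemma char_ne_two (hodd : Odd p) : ringChar (ZMod p) ≠ 2 := by
  rw [ZMod.ringChar_zmod_n]
  rcases hodd with ⟨k, hk⟩
  omega

lemma nonsq_ne_zero {v : ZMod p} (hv : ¬ IsSquare v) : v ≠ 0 := by
  rintro rfl
  exact hv ⟨0, by ring⟩

lemma nonsq_ratio (hodd : Odd p) {v u : ZMod p} (hv : ¬ IsSquare v) (hu : ¬ IsSquare u) :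
    ∃ c : ZMod p, c ≠ 0 ∧ v = c ^ 2 * u := by
  have hv0 : v ≠ 0 := nonsq_ne_zero hv
  have hu0 : u ≠ 0 := nonsq_ne_zero hu
  have hqv := (quadraticChar_neg_one_iff_not_isSquare (F := ZMod p)).mpr hv
  have hqu := (quadraticChar_neg_one_iff_not_isSquare (F := ZMod p)).mpr hu
  have hsq : IsSquare (v * u) := by
    have h1 : quadraticChar (ZMod p) (v * u) = 1 := by rw [map_mul, hqv, hqu]; ring
    exact (quadraticChar_one_iff_isSquare (mul_ne_zero hv0 hu0)).mp h1
  obtain ⟨r, hr⟩ := hsq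
  have hr0 : r ≠ 0 := by
    rintro rfl
    rw [mul_zero] at hr
    exact mul_ne_zero hv0 hu0 hr
  refine ⟨r * u⁻¹, mul_ne_zero hr0 (inv_ne_zero hu0), ?_⟩
  field_simp
  linear_combination hr

lemma class_card_sum (hodd : Odd p) :
    1 + ((univ.filter fun v : ZMod p => ¬ v = 0 ∧ IsSquare v).card
      + (univ.filter fun v : ZMod p => ¬ v = 0 ∧ ¬ IsSquare v).card) = p := by
  have h1 := Finset.card_filter_add_card_filter_not
    (s := (univ : Finset (ZMod p))) (p := fun v : ZMod p => v = 0)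
  have h2 := Finset.card_filter_add_card_filter_not
    (s := (univ.filter fun v : ZMod p => ¬ v = 0)) (p := fun v : ZMod p => IsSquare v)
  rw [Finset.filter_filter, Finset.filter_filter] at h2
  have h3 : (univ.filter fun v : ZMod p => v = 0) = {(0 : ZMod p)} := by
    rw [Finset.filter_eq', if_pos (mem_univ _)]
  have h4 : (univ : Finset (ZMod p)).card = p := by rw [Finset.card_univ, ZMod.card]
  have h5 : ((univ.filter fun v : ZMod p => ¬ v = 0 ∧ IsSquare v).card
      + (univ.filter fun v : ZMod p => ¬ v = 0 ∧ ¬ IsSquare v).card)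
      = (univ.filter fun v : ZMod p => ¬ v = 0).card := by
    rw [← h2]
  rw [h5]
  rw [h3, h4, Finset.card_singleton] at h1
  omega

lemma class_card_eq (hodd : Odd p) :
    ((univ.filter fun v : ZMod p => ¬ v = 0 ∧ IsSquare v).card : ℤ)
      = ((univ.filter fun v : ZMod p => ¬ v = 0 ∧ ¬ IsSquare v).card : ℤ) := by
  have hchar := char_ne_two hodd
  have hsum := quadraticChar_sum_zero (F := ZMod p) hchar
  rw [← Finset.sum_filter_add_sum_filter_not univ (fun v : ZMod p => v = 0)] at hsum
  have h0 : ∑ v ∈ univ.filter (fun v : ZMod p => v = 0), quadraticChar (ZMod p) v = 0 := by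
    apply Finset.sum_eq_zero
    intro v hv
    simp only [mem_filter] at hv
    rw [hv.2]
    exact quadraticChar_zero
  rw [h0, zero_add,
    ← Finset.sum_filter_add_sum_filter_not (univ.filter fun v : ZMod p => ¬ v = 0)
      (fun v : ZMod p => IsSquare v), Finset.filter_filter, Finset.filter_filter] at hsum
  have h1 : ∑ v ∈ univ.filter (fun v : ZMod p => ¬ v = 0 ∧ IsSquare v),
      quadraticChar (ZMod p) v
      = ((univ.filter fun v : ZMod p => ¬ v = 0 ∧ IsSquare v).card : ℤ) := by
    rw [Finset.sum_congr rfl (fun v hv => ?_), Finset.sum_const, nsmul_eq_mul, mul_one]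
    simp only [mem_filter] at hv
    exact (quadraticChar_one_iff_isSquare hv.2.1).mpr hv.2.2
  have h2 : ∑ v ∈ univ.filter (fun v : ZMod p => ¬ v = 0 ∧ ¬ IsSquare v),
      quadraticChar (ZMod p) v
      = -((univ.filter fun v : ZMod p => ¬ v = 0 ∧ ¬ IsSquare v).card : ℤ) := by
    rw [Finset.sum_congr rfl (fun v hv => ?_), Finset.sum_const, nsmul_eq_mul, mul_neg_one]
    simp only [mem_filter] at hv
    exact (quadraticChar_neg_one_iff_not_isSquare (F := ZMod p)).mpr hv.2.2
  rw [h1, h2] at hsum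
  linarith

end SquareClasses
/-! ### The main counting result -/

section Main

variable {p m : ℕ} [Fact p.Prime]

local notation "V" => GaloisField p m
local notation "F" => ZMod p

theorem count_mem (hp : Odd p) {t : ℕ} (hmt : m = 2 * t + 1)
    {f : V → V}
    (hPN : ∀ a : V, a ≠ 0 → ∀ b : V, ∃! x : V, f (x + a) - f x = b)
    {δ : Fin m → Fin m → V}
    (hDO : ∀ x, f x = ∑ i : Fin m, ∑ j : Fin m, δ i j * x ^ (p ^ (i : ℕ) + p ^ (j : ℕ)))
    {a : V} (ha : a ≠ 0) (b : V) (w : F) :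
    ∃ ε : ℤ, (ε = 0 ∨ ε = (p : ℤ) ^ t ∨ ε = -(p : ℤ) ^ t) ∧
      (((univ.filter fun x : V => tr p m (a * f x + b * x) = w).card : ℤ)
        = (p : ℤ) ^ (2 * t) + ε) := by
  have hm0 : m ≠ 0 := by omega
  have hppr : p.Prime := Fact.out
  -- trace representation of the associated bilinear form
  have hrep : ∀ y : V, ∃ bv : V,
      ∀ x, tr p m (a * (f (x + y) - f x - f y)) = tr p m (bv * x) := by
    intro y
    exact exists_tr_rep p m
      { toFun := fun x => tr p m (a * (f (x + y) - f x - f y))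
        map_add' := by
          intro x x'
          show tr p m (a * (f (x + x' + y) - f (x + x') - f y))
            = tr p m (a * (f (x + y) - f x - f y)) + tr p m (a * (f (x' + y) - f x' - f y))
          rw [D_add_left hDO x x' y, mul_add, tr_add]
        map_smul' := by
          intro c x
          show tr p m (a * (f (c • x + y) - f (c • x) - f y))
            = c • tr p m (a * (f (x + y) - f x - f y))
          rw [Algebra.smul_def, D_smul_left hDO c x y, mul_left_comm, tr_am, smul_eq_mul] }
  choose bfun hbfun using hrep
  -- nondegeneracy
  have hBnd : ∀ y : V, y ≠ 0 → ∃ x, tr p m (a * (f (x + y) - f x - f y)) ≠ 0 := by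
    intro y hy
    obtain ⟨z, hz⟩ := tr_exists_ne p m
    obtain ⟨x, hx⟩ := (phi_bij hPN hy).2 (a⁻¹ * z + f y)
    have hx' : f (x + y) - f x = a⁻¹ * z + f y := hx
    refine ⟨x, ?_⟩
    have h1 : f (x + y) - f x - f y = a⁻¹ * z := by rw [hx']; ring
    rw [h1, ← mul_assoc, mul_inv_cancel₀ ha, one_mul]
    exact hz
  have hbne : ∀ y : V, y ≠ 0 → bfun y ≠ 0 := by
    intro y hy h0
    obtain ⟨x, hx⟩ := hBnd y hy
    apply hx
    rw [hbfun y x, h0, zero_mul, tr_zero]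
  have hbinj : Function.Injective bfun := by
    intro y y' hyy'
    by_contra hne
    obtain ⟨x, hx⟩ := hBnd (y - y') (sub_ne_zero_of_ne hne)
    apply hx
    have h2 := D_add_right hDO x y' (y - y')
    rw [show y' + (y - y') = y by ring] at h2
    have h3 : a * (f (x + (y - y')) - f x - f (y - y'))
        = a * (f (x + y) - f x - f y) - a * (f (x + y') - f x - f y') := by
      rw [h2]; ring
    rw [h3, tr_sub, hbfun y x, hbfun y' x, hyy', sub_self]
  obtain ⟨y0, hy0⟩ := (Finite.injective_iff_surjective.mp hbinj) (-b)
  -- the quadratic form and its counting function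
  set QQ : V → F := fun x => tr p m (a * f x) with hQQ
  set N : F → ℕ := fun v => (univ.filter fun x : V => QQ x = v).card with hN
  set e : F := QQ y0 + tr p m (b * y0) with he
  -- shifting: the affine count equals a count for the pure quadratic form
  have hshift : ∀ x : V, tr p m (a * f (x + y0) + b * (x + y0)) = QQ x + e := by
    intro x
    have h1 : a * f (x + y0) + b * (x + y0)
        = (a * f x) + ((a * (f (x + y0) - f x - f y0)) + ((a * f y0) + (b * y0) + (b * x))) := by
      ring
    rw [h1, tr_add, tr_add, tr_add, tr_add, hbfun y0 x, hy0, he, hQQ]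
    have hnb : tr p m (-b * x) = - tr p m (b * x) := by
      rw [show (-b) * x = -(b * x) by ring]
      exact map_neg (Algebra.trace (ZMod p) (GaloisField p m)) (b * x)
    rw [hnb]
    ring
  have hcount : (univ.filter fun x : V => tr p m (a * f x + b * x) = w).card = N (w - e) := by
    simp only [hN]
    refine (Finset.card_nbij (fun x => x + y0) (fun x hx => ?_) (fun x _ y _ h => by simpa using h) ?_).symm
    · simp only [mem_coe, mem_filter, mem_univ, true_and] at hx ⊢
      rw [hshift x, hx]
      ring
    · intro y hy
      simp only [Finset.coe_filter, Set.mem_setOf_eq, mem_univ, true_and] at hy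
      refine ⟨y - y0, ?_, by ring⟩
      simp only [Finset.coe_filter, Set.mem_setOf_eq, mem_univ, true_and, mem_coe, mem_filter]
      have := hshift (y - y0)
      rw [show y - y0 + y0 = y by ring] at this
      rw [this] at hy
      linear_combination hy
  -- the derivative of the quadratic form
  have hQder : ∀ u x : V, QQ (x + u) = QQ x + tr p m (bfun u * x) + QQ u := by
    intro u x
    simp only [hQQ]
    have h1 : a * f (x + u) = (a * f x) + ((a * (f (x + u) - f x - f u)) + (a * f u)) := by ring
    rw [h1, tr_add, tr_add, hbfun u x]
    ring
  have hbal : ∀ u : V, u ≠ 0 →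
      (univ.filter fun x : V => QQ (x + u) = QQ x).card = p ^ (m - 1) := by
    intro u hu
    have h1 : (univ.filter fun x : V => QQ (x + u) = QQ x)
        = (univ.filter fun x : V => tr p m (bfun u * x) = - QQ u) := by
      apply Finset.filter_congr
      intro x _
      rw [hQder u x]
      constructor
      · intro h; linear_combination h
      · intro h; linear_combination h
    rw [h1]
    exact card_fiber_bij p m hm0 (ψ := fun x => bfun u * x)
      (mulLeft_bijective₀ _ (hbne u hu)) _
  -- first counting identity
  have hC1 : ∑ v : F, N v = p ^ m := by
    simp only [hN]
    rw [← card_V p m hm0]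
    exact (Finset.card_eq_sum_card_fiberwise (fun x _ => mem_univ (QQ x))).symm
  -- second counting identity
  have hA : ∑ x : V, N (QQ x) = ∑ v : F, N v * N v := by
    rw [← Finset.sum_fiberwise_of_maps_to (fun x (_ : x ∈ univ) => mem_univ (QQ x))
      (fun x => N (QQ x))]
    refine Finset.sum_congr rfl fun v _ => ?_
    calc ∑ x ∈ univ.filter (fun x : V => QQ x = v), N (QQ x)
        = ∑ x ∈ univ.filter (fun x : V => QQ x = v), N v := by
          refine Finset.sum_congr rfl fun x hx => ?_
          simp only [mem_filter] at hx
          rw [hx.2]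
      _ = N v * N v := by
          rw [Finset.sum_const, smul_eq_mul]
  have hB : ∀ x : V, N (QQ x) = (univ.filter fun u : V => QQ (x + u) = QQ x).card := by
    intro x
    simp only [hN]
    refine (Finset.card_nbij (fun u => x + u) (fun u hu => ?_)
      (fun u _ u' _ h => by simpa using h) ?_).symm
    · simp only [mem_coe, mem_filter, mem_univ, true_and] at hu ⊢
      exact hu
    · intro y hy
      simp only [Finset.coe_filter, Set.mem_setOf_eq, mem_univ, true_and] at hy
      refine ⟨y - x, ?_, by ring⟩
      simp only [Finset.coe_filter, Set.mem_setOf_eq, mem_univ, true_and, mem_coe, mem_filter]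
      rw [show x + (y - x) = y by ring]
      exact hy
  have hCcomm : ∑ x : V, (univ.filter fun u : V => QQ (x + u) = QQ x).card
      = ∑ u : V, (univ.filter fun x : V => QQ (x + u) = QQ x).card := by
    simp only [Finset.card_filter]
    exact Finset.sum_comm
  have hD : ∑ u : V, (univ.filter fun x : V => QQ (x + u) = QQ x).card
      = (p ^ m - 1) * p ^ (m - 1) + p ^ m := by
    rw [Finset.sum_eq_sum_sdiff_singleton_add (mem_univ (0 : V))]
    have h0 : (univ.filter fun x : V => QQ (x + 0) = QQ x) = univ :=
      Finset.filter_true_of_mem fun x _ => by rw [add_zero]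
    have h1 : ∑ u ∈ univ \ {(0 : V)}, (univ.filter fun x : V => QQ (x + u) = QQ x).card
        = (p ^ m - 1) * p ^ (m - 1) := by
      rw [Finset.sum_congr rfl (fun u hu =>
          hbal u (by simpa using (Finset.mem_sdiff.mp hu).2)),
        Finset.sum_const, smul_eq_mul,
        Finset.card_sdiff_of_subset (Finset.singleton_subset_iff.mpr (mem_univ (0 : V))),
        card_V p m hm0, Finset.card_singleton]
    rw [h0, h1, card_V p m hm0]
  have hC2 : ∑ v : F, N v * N v = (p ^ m - 1) * p ^ (m - 1) + p ^ m := by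
    rw [← hA, Finset.sum_congr rfl fun x _ => hB x, hCcomm, hD]
  -- scaling invariance
  have hQsmul : ∀ (c : F) (x : V), QQ (algebraMap F V c * x) = c ^ 2 * QQ x := by
    intro c x
    simp only [hQQ]
    have h1 : a * f (algebraMap F V c * x) = algebraMap F V (c ^ 2) * (a * f x) := by
      rw [f_smul_sq hDO c x, map_pow]
      ring
    rw [h1, tr_am]
  have hamInj : Function.Injective (algebraMap F V) := (algebraMap F V).injective
  have hNsq : ∀ (c : F), c ≠ 0 → ∀ v : F, N (c ^ 2 * v) = N v := by
    intro c hc v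
    have hc' : algebraMap F V c ≠ 0 := fun h => hc (hamInj (h.trans (map_zero _).symm))
    simp only [hN]
    refine (Finset.card_nbij (fun x => algebraMap F V c * x) (fun x hx => ?_)
      (fun x _ y _ h => mul_left_cancel₀ hc' h) ?_).symm
    · simp only [mem_coe, mem_filter, mem_univ, true_and] at hx ⊢
      rw [hQsmul c x, hx]
    · intro y hy
      simp only [Finset.coe_filter, Set.mem_setOf_eq, mem_univ, true_and] at hy
      refine ⟨algebraMap F V c⁻¹ * y, ?_, ?_⟩
      · simp only [Finset.coe_filter, Set.mem_setOf_eq, mem_univ, true_and, mem_coe, mem_filter]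
        rw [hQsmul c⁻¹ y, hy]
        field_simp
      · show algebraMap F V c * (algebraMap F V c⁻¹ * y) = y
        rw [← mul_assoc, ← map_mul, mul_inv_cancel₀ hc, map_one, one_mul]
  -- class constancy
  have hchar : ringChar F ≠ 2 := char_ne_two hp
  obtain ⟨u₀, hu₀⟩ := FiniteField.exists_nonsquare (hF := hchar)
  have hconst_sq : ∀ v : F, ¬ v = 0 → IsSquare v → N v = N 1 := by
    rintro v hv ⟨r, hr⟩
    have hr0 : r ≠ 0 := by
      rintro rfl
      rw [mul_zero] at hr
      exact hv hr
    have h1 : v = r ^ 2 * 1 := by rw [hr]; ring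
    rw [h1, hNsq r hr0 1]
  have hconst_ns : ∀ v : F, ¬ IsSquare v → N v = N u₀ := by
    intro v hv
    obtain ⟨c, hc, hvc⟩ := nonsq_ratio hp hv hu₀
    rw [hvc, hNsq c hc u₀]
  -- split the two identities along square classes
  have hsplit : ∀ h : F → ℕ, ∑ v : F, h v
      = h 0 + (∑ v ∈ univ.filter (fun v : F => ¬ v = 0 ∧ IsSquare v), h v
          + ∑ v ∈ univ.filter (fun v : F => ¬ v = 0 ∧ ¬ IsSquare v), h v) := by
    intro h
    rw [← Finset.sum_filter_add_sum_filter_not univ (fun v : F => v = 0) h]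
    congr 1
    · rw [Finset.filter_eq', if_pos (mem_univ _), Finset.sum_singleton]
    · rw [← Finset.sum_filter_add_sum_filter_not (univ.filter fun v : F => ¬ v = 0)
        (fun v : F => IsSquare v) h, Finset.filter_filter, Finset.filter_filter]
  set k1 : ℕ := (univ.filter fun v : F => ¬ v = 0 ∧ IsSquare v).card with hk1
  set k2 : ℕ := (univ.filter fun v : F => ¬ v = 0 ∧ ¬ IsSquare v).card with hk2
  have hsum_sq : ∀ h : F → ℕ, (∀ v : F, ¬ v = 0 → IsSquare v → h v = h 1) →
      ∑ v ∈ univ.filter (fun v : F => ¬ v = 0 ∧ IsSquare v), h v = k1 * h 1 := by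
    intro h hh
    rw [Finset.sum_congr rfl (fun v hv => ?_), Finset.sum_const, smul_eq_mul]
    simp only [mem_filter] at hv
    exact hh v hv.2.1 hv.2.2
  have hsum_ns : ∀ h : F → ℕ, (∀ v : F, ¬ IsSquare v → h v = h u₀) →
      ∑ v ∈ univ.filter (fun v : F => ¬ v = 0 ∧ ¬ IsSquare v), h v = k2 * h u₀ := by
    intro h hh
    rw [Finset.sum_congr rfl (fun v hv => ?_), Finset.sum_const, smul_eq_mul]
    simp only [mem_filter] at hv
    exact hh v hv.2.2
  have hE1nat : N 0 + (k1 * N 1 + k2 * N u₀) = p ^ m := by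
    rw [← hC1, hsplit N, hsum_sq N hconst_sq, hsum_ns N hconst_ns]
  have hE2nat : N 0 * N 0 + (k1 * (N 1 * N 1) + k2 * (N u₀ * N u₀))
      = (p ^ m - 1) * p ^ (m - 1) + p ^ m := by
    rw [← hC2, hsplit (fun v => N v * N v),
      hsum_sq (fun v => N v * N v) (fun v h1 h2 => by
        show N v * N v = N 1 * N 1
        rw [hconst_sq v h1 h2]),
      hsum_ns (fun v => N v * N v) (fun v h1 => by
        show N v * N v = N u₀ * N u₀
        rw [hconst_ns v h1])]
  -- pass to the integers
  have hkk : 2 * (k1 : ℤ) = (p : ℤ) - 1 := by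
    have h1 := class_card_sum (p := p) hp
    have h2 := class_card_eq (p := p) hp
    rw [← hk1, ← hk2] at h1 h2
    have h1' : 1 + ((k1 : ℤ) + (k2 : ℤ)) = (p : ℤ) := by exact_mod_cast h1
    omega
  have hpm1 : 1 ≤ p ^ m := Nat.one_le_pow _ _ hppr.pos
  have hmm : m - 1 = 2 * t := by omega
  have hpowm : (p : ℤ) ^ m = (p : ℤ) ^ (2 * t) * (p : ℤ) := by
    rw [hmt, pow_succ]
  have hE1z : (N 0 : ℤ) + ((k1 : ℤ) * (N 1 : ℤ) + (k2 : ℤ) * (N u₀ : ℤ))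
      = (p : ℤ) ^ (2 * t) * (p : ℤ) := by
    rw [← hpowm]
    exact_mod_cast hE1nat
  have hE2z : (N 0 : ℤ) * (N 0 : ℤ)
      + ((k1 : ℤ) * ((N 1 : ℤ) * (N 1 : ℤ)) + (k2 : ℤ) * ((N u₀ : ℤ) * (N u₀ : ℤ)))
      = ((p : ℤ) ^ (2 * t) * (p : ℤ) - 1) * (p : ℤ) ^ (2 * t) + (p : ℤ) ^ (2 * t) * (p : ℤ) := by
    have := hE2nat
    rw [hmm] at this
    have hcast : ((p ^ m - 1 : ℕ) : ℤ) = (p : ℤ) ^ (2 * t) * (p : ℤ) - 1 := by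
      rw [Nat.cast_sub hpm1]
      push_cast
      rw [hpowm]
    calc ((N 0 : ℤ) * (N 0 : ℤ)
          + ((k1 : ℤ) * ((N 1 : ℤ) * (N 1 : ℤ)) + (k2 : ℤ) * ((N u₀ : ℤ) * (N u₀ : ℤ))))
        = (((N 0 * N 0 + (k1 * (N 1 * N 1) + k2 * (N u₀ * N u₀)) : ℕ)) : ℤ) := by push_cast; ring
      _ = (((p ^ m - 1) * p ^ (2 * t) + p ^ m : ℕ) : ℤ) := by rw [this]
      _ = ((p : ℤ) ^ (2 * t) * (p : ℤ) - 1) * (p : ℤ) ^ (2 * t) + (p : ℤ) ^ (2 * t) * (p : ℤ) := by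
          push_cast [Nat.cast_sub hpm1]
          rw [hpowm]
  have hk12z : (k1 : ℤ) = (k2 : ℤ) := by
    have h2 := class_card_eq (p := p) hp
    rw [← hk1, ← hk2] at h2
    exact h2
  rw [← hk12z] at hE1z hE2z
  -- the key arithmetic
  set P : ℤ := (p : ℤ) ^ (2 * t) with hP
  have hE1 : ((N 0 : ℤ) - P) + (k1 : ℤ) * (((N 1 : ℤ) - P) + ((N u₀ : ℤ) - P)) = 0 := by
    linear_combination hE1z - P * hkk
  have hE2 : ((N 0 : ℤ) - P) ^ 2
      + (k1 : ℤ) * (((N 1 : ℤ) - P) ^ 2 + ((N u₀ : ℤ) - P) ^ 2)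
      = ((p : ℤ) - 1) * (p : ℤ) ^ (2 * t) := by
    linear_combination hE2z - 2 * P * hE1z + P ^ 2 * hkk
  obtain ⟨hmem0, hmem1, hmemu⟩ := key_arith hppr hp t hkk hE1 hE2
  -- conclude
  rw [hcount]
  by_cases h0 : w - e = 0
  · exact ⟨(N 0 : ℤ) - P, hmem0, by rw [h0]; push_cast; ring⟩
  · by_cases hsq : IsSquare (w - e)
    · refine ⟨(N 1 : ℤ) - P, hmem1, ?_⟩
      rw [hconst_sq (w - e) h0 hsq]
      push_cast
      ring
    · refine ⟨(N u₀ : ℤ) - P, hmemu, ?_⟩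
      rw [hconst_ns (w - e) hsq]
      push_cast
      ring

end Main

end Stmt3Aux

/-- For `p` an odd prime, `m` odd, `f` a PN-DO function on `F_{p^m}`,
`a ≠ 0`, and any `b, c`: the count `#{x : Tr(a f(x)+bx)+c = 0}` lies in
`{p^{m−1}, p^{m−1} − p^{(m−1)/2}, p^{m−1} + p^{(m−1)/2}}`, and consequently the codeword
`c(a,b,c)` has Hamming weight `(p−1)p^{m−1}+σ`, `(p−1)p^{m−1}+p^{(m−1)/2}+σ`, or
`(p−1)p^{m−1}−p^{(m−1)/2}+σ`, where `σ = 1` if `Tr(a) ≠ 0` and `σ = 0` otherwise. -/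


theorem stmt_3 (p m : ℕ) [Fact p.Prime] (hp : Odd p) (hm : Odd m)
    (f : GaloisField p m → GaloisField p m)
    (hPN : ∀ a : GaloisField p m, a ≠ 0 → ∀ b : GaloisField p m,
      ∃! x : GaloisField p m, f (x + a) - f x = b)
    (δ : Fin m → Fin m → GaloisField p m)
    (hDO : ∀ x, f x = ∑ i : Fin m, ∑ j : Fin m, δ i j * x ^ (p ^ (i : ℕ) + p ^ (j : ℕ)))
    (a : GaloisField p m) (ha : a ≠ 0) (b : GaloisField p m) (c : ZMod p) :
    ((Nat.card {x : GaloisField p m // tr p m (a * f x + b * x) + c = 0} : ℤ)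
        ∈ ({(p : ℤ) ^ (m - 1),
            (p : ℤ) ^ (m - 1) - (p : ℤ) ^ ((m - 1) / 2),
            (p : ℤ) ^ (m - 1) + (p : ℤ) ^ ((m - 1) / 2)} : Set ℤ)) ∧
    ((hammingNorm (fullWord p m f a b c) : ℤ)
        ∈ ({((p : ℤ) - 1) * (p : ℤ) ^ (m - 1) + (if tr p m a ≠ 0 then 1 else 0),
            ((p : ℤ) - 1) * (p : ℤ) ^ (m - 1) + (p : ℤ) ^ ((m - 1) / 2)
              + (if tr p m a ≠ 0 then 1 else 0),
            ((p : ℤ) - 1) * (p : ℤ) ^ (m - 1) - (p : ℤ) ^ ((m - 1) / 2)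
              + (if tr p m a ≠ 0 then 1 else 0)} : Set ℤ)) := by
  obtain ⟨t, ht⟩ : ∃ t, m = 2 * t + 1 := by
    rcases hm with ⟨r, hr⟩
    exact ⟨r, by omega⟩
  have hm0 : m ≠ 0 := by omega
  have hppr : p.Prime := Fact.out
  obtain ⟨ε, hε, hcard⟩ := Stmt3Aux.count_mem hp ht hPN hDO ha b (-c)
  have hpred : (Finset.univ.filter fun x : GaloisField p m =>
        tr p m (a * f x + b * x) + c = 0)
      = (Finset.univ.filter fun x : GaloisField p m =>
        tr p m (a * f x + b * x) = -c) :=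
    Finset.filter_congr fun x _ => add_eq_zero_iff_eq_neg
  have hn0 : ((Finset.univ.filter fun x : GaloisField p m =>
        tr p m (a * f x + b * x) + c = 0).card : ℤ) = (p : ℤ) ^ (2 * t) + ε := by
    rw [hpred]
    exact hcard
  have hNat : (Nat.card {x : GaloisField p m // tr p m (a * f x + b * x) + c = 0} : ℤ)
      = ((Finset.univ.filter fun x : GaloisField p m =>
        tr p m (a * f x + b * x) + c = 0).card : ℤ) := by
    rw [Nat.card_eq_fintype_card, Fintype.card_subtype]
  rw [show (m - 1) / 2 = t from by omega, show m - 1 = 2 * t from by omega]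
  have hle : (Finset.univ.filter fun x : GaloisField p m =>
        tr p m (a * f x + b * x) + c = 0).card ≤ p ^ m := by
    rw [← Stmt3Aux.card_V p m hm0]
    exact Finset.card_filter_le _ _
  constructor
  · simp only [Set.mem_insert_iff, Set.mem_singleton_iff]
    rcases hε with h | h | h
    · exact Or.inl (by rw [hNat, hn0, h, add_zero])
    · exact Or.inr (Or.inr (by rw [hNat, hn0, h]))
    · exact Or.inr (Or.inl (by rw [hNat, hn0, h]; ring))
  · have h1 : hammingNorm (fullWord p m f a b c)
        = (if tr p m a ≠ 0 then 1 else 0)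
          + (Finset.univ.filter fun x : GaloisField p m =>
              ¬ (tr p m (a * f x + b * x) + c = 0)).card := by
      show (Finset.univ.filter fun i : Option (GaloisField p m) =>
          fullWord p m f a b c i ≠ 0).card = _
      rw [Finset.card_filter, Fintype.sum_option, ← Finset.card_filter]
      rfl
    have h2 : (Finset.univ.filter fun x : GaloisField p m =>
          ¬ (tr p m (a * f x + b * x) + c = 0)).card
        = p ^ m - (Finset.univ.filter fun x : GaloisField p m =>
          tr p m (a * f x + b * x) + c = 0).card := by
      have h3 := Finset.card_filter_add_card_filter_not
        (s := (Finset.univ : Finset (GaloisField p m)))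
        (p := fun x : GaloisField p m => tr p m (a * f x + b * x) + c = 0)
      rw [Stmt3Aux.card_V p m hm0] at h3
      omega
    have hham : (hammingNorm (fullWord p m f a b c) : ℤ)
        = (if tr p m a ≠ 0 then 1 else 0)
          + ((p : ℤ) ^ m - ((p : ℤ) ^ (2 * t) + ε)) := by
      rw [h1, h2, ← hn0]
      push_cast [Nat.cast_sub hle]
      split_ifs <;> ring
    have hpow : (p : ℤ) ^ m = (p : ℤ) ^ (2 * t) * (p : ℤ) := by
      rw [ht, pow_succ]
    simp only [Set.mem_insert_iff, Set.mem_singleton_iff]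
    rcases hε with h | h | h
    · exact Or.inl (by rw [hham, h, hpow]; ring)
    · exact Or.inr (Or.inr (by rw [hham, h, hpow]; ring))
    · exact Or.inr (Or.inl (by rw [hham, h, hpow]; ring))
end
end

section
/- Let p = 3, let m > 1 be a positive integer, and let f : F_{3^m} → F_{3^m} be a PN-DO function. Then the dual code C̄_f^⊥ of the punctured code C̄_f ⊆ F_3^{3^m} has dimension 3^m − 2m − 1 over F_3 and minimum Hamming distance exactly 5; that is, C̄_f^⊥ is a ternary [3^m, 3^m−2m−1, 5] code. -/
noncomputable section
open scoped Classical

instance : Fact (Nat.Prime 3) := ⟨Nat.prime_three⟩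

/-- The punctured codeword `(Tr(a f(x)+bx)+c)_{x∈F_{p^m}}` of length `p^m`. -/
def pWord (p m : ℕ) [Fact p.Prime] (f : GaloisField p m → GaloisField p m)
    (a b : GaloisField p m) (c : ZMod p) : GaloisField p m → ZMod p :=
  fun x => tr p m (a * f x + b * x) + c

/-- The dual `C̄_f^⊥` of the punctured code: all vectors orthogonal to every codeword. -/
def pDual (p m : ℕ) [Fact p.Prime] (f : GaloisField p m → GaloisField p m) :
    Set (GaloisField p m → ZMod p) :=
  {v | ∀ (a b : GaloisField p m) (c : ZMod p), ∑ x, v x * pWord p m f a b c x = 0}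

variable {m : ℕ}

/-- Polar form of the DO polynomial. -/
def Bf (δ : Fin m → Fin m → GaloisField 3 m) (x y : GaloisField 3 m) : GaloisField 3 m :=
  ∑ i : Fin m, ∑ j : Fin m,
    δ i j * (x ^ (3 ^ (i : ℕ)) * y ^ (3 ^ (j : ℕ)) + y ^ (3 ^ (i : ℕ)) * x ^ (3 ^ (j : ℕ)))

section DO
variable {f : GaloisField 3 m → GaloisField 3 m} {δ : Fin m → Fin m → GaloisField 3 m}
variable (hDO : ∀ x, f x = ∑ i : Fin m, ∑ j : Fin m, δ i j * x ^ (3 ^ (i : ℕ) + 3 ^ (j : ℕ)))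
include hDO

theorem f_add (x y : GaloisField 3 m) : f (x + y) = f x + f y + Bf δ x y := by
  rw [hDO, hDO, hDO, Bf]
  rw [← Finset.sum_add_distrib, ← Finset.sum_add_distrib]
  refine Finset.sum_congr rfl fun i _ => ?_
  rw [← Finset.sum_add_distrib, ← Finset.sum_add_distrib]
  refine Finset.sum_congr rfl fun j _ => ?_
  rw [pow_add, pow_add, pow_add, add_pow_char_pow, add_pow_char_pow]
  ring

theorem f_zero : f 0 = 0 := by
  rw [hDO]
  refine Finset.sum_eq_zero fun i _ => Finset.sum_eq_zero fun j _ => ?_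
  rw [zero_pow (by positivity), mul_zero]

theorem f_neg (x : GaloisField 3 m) : f (-x) = f x := by
  rw [hDO, hDO]
  refine Finset.sum_congr rfl fun i _ => Finset.sum_congr rfl fun j _ => ?_
  have he : Even (3 ^ (i : ℕ) + 3 ^ (j : ℕ)) :=
    (Odd.pow ⟨1, by norm_num⟩).add_odd (Odd.pow ⟨1, by norm_num⟩)
  rw [he.neg_pow]

end DO

theorem Bf_symm (δ : Fin m → Fin m → GaloisField 3 m) (x y : GaloisField 3 m) :
    Bf δ x y = Bf δ y x := by
  refine Finset.sum_congr rfl fun i _ => Finset.sum_congr rfl fun j _ => ?_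
  ring

theorem Bf_add_right (δ : Fin m → Fin m → GaloisField 3 m) (x y z : GaloisField 3 m) :
    Bf δ x (y + z) = Bf δ x y + Bf δ x z := by
  unfold Bf
  rw [← Finset.sum_add_distrib]
  refine Finset.sum_congr rfl fun i _ => ?_
  rw [← Finset.sum_add_distrib]
  refine Finset.sum_congr rfl fun j _ => ?_
  rw [add_pow_char_pow, add_pow_char_pow]
  ring

theorem Bf_zero_right (δ : Fin m → Fin m → GaloisField 3 m) (x : GaloisField 3 m) :
    Bf δ x 0 = 0 := by
  refine Finset.sum_eq_zero fun i _ => Finset.sum_eq_zero fun j _ => ?_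
  rw [zero_pow (by positivity), zero_pow (by positivity)]
  ring

theorem Bf_neg_right (δ : Fin m → Fin m → GaloisField 3 m) (x y : GaloisField 3 m) :
    Bf δ x (-y) = - Bf δ x y := by
  have h := Bf_add_right δ x y (-y)
  rw [add_neg_cancel, Bf_zero_right] at h
  linear_combination -h

theorem three_eq_zero : (3 : GaloisField 3 m) = 0 := by
  exact_mod_cast CharP.cast_eq_zero (GaloisField 3 m) 3

section PNDO
variable {f : GaloisField 3 m → GaloisField 3 m} {δ : Fin m → Fin m → GaloisField 3 m}
variable (hPN : ∀ a : GaloisField 3 m, a ≠ 0 → ∀ b : GaloisField 3 m,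
      ∃! x : GaloisField 3 m, f (x + a) - f x = b)
variable (hDO : ∀ x, f x = ∑ i : Fin m, ∑ j : Fin m, δ i j * x ^ (3 ^ (i : ℕ) + 3 ^ (j : ℕ)))
include hPN hDO

theorem pn_unique' {a : GaloisField 3 m} (ha : a ≠ 0) {x y : GaloisField 3 m}
    (h : f (x + a) - f x = f (y + a) - f y) : x = y := by
  obtain ⟨z, -, hu⟩ := hPN a ha (f (y + a) - f y)
  exact (hu x h).trans (hu y rfl).symm

theorem B_ker {a : GaloisField 3 m} (ha : a ≠ 0) {x : GaloisField 3 m}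
    (h : Bf δ x a = 0) : x = 0 := by
  refine pn_unique' hPN hDO ha (x := x) (y := 0) ?_
  have hz : Bf δ 0 a = 0 := by rw [Bf_symm, Bf_zero_right]
  rw [f_add hDO, f_add hDO, h, hz]
  ring

theorem B_inj {a : GaloisField 3 m} (ha : a ≠ 0) {x y : GaloisField 3 m}
    (h : Bf δ x a = Bf δ y a) : x = y := by
  have hxy : Bf δ (x - y) a = 0 := by
    have h2 := Bf_add_right δ a y (x - y)
    rw [add_sub_cancel] at h2
    linear_combination Bf_symm δ (x - y) a - h2 + Bf_symm δ a x - Bf_symm δ a y + h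
  by_contra hne
  exact hne (by linear_combination B_ker hPN hDO ha hxy)

theorem B_surj {a : GaloisField 3 m} (ha : a ≠ 0) (t : GaloisField 3 m) :
    ∃ w, Bf δ w a = t := by
  have hinj : Function.Injective (fun x => Bf δ x a) := fun x y h => B_inj hPN hDO ha h
  exact Finite.injective_iff_surjective.mp hinj t

theorem Bf_self (x : GaloisField 3 m) : Bf δ x x = - f x := by
  have h := f_add hDO x x
  have hneg : x + x = -x := by linear_combination x * three_eq_zero
  rw [hneg, f_neg hDO] at h
  linear_combination -h

theorem f_ne {x : GaloisField 3 m} (hx : x ≠ 0) : f x ≠ 0 := by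
  intro h
  have : Bf δ x x = 0 := by rw [Bf_self hPN hDO, h, neg_zero]
  exact hx (B_ker hPN hDO hx this)

theorem three_zero {x y z : GaloisField 3 m} (hsum : x + y + z = 0)
    (hf : f x + f y + f z = 0) (hxy : x ≠ y) : False := by
  have hz : z = -(x + y) := by linear_combination hsum
  have h1 : f z = f x + f y + Bf δ x y := by rw [hz, f_neg hDO, f_add hDO]
  have h2 : f (x - y) = f x + f y - Bf δ x y := by
    rw [sub_eq_add_neg, f_add hDO, f_neg hDO, Bf_neg_right]; ring
  have h3 : f (x - y) = 0 := by
    linear_combination h2 - hf + h1 + (f x + f y) * three_eq_zero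
  exact f_ne hPN hDO (sub_ne_zero.mpr hxy) h3

theorem four_case {x1 x2 y1 y2 : GaloisField 3 m}
    (hx : x1 ≠ x2) (h11 : x1 ≠ y1) (h12 : x1 ≠ y2) (h21 : x2 ≠ y1) (h22 : x2 ≠ y2)
    (hsum : x1 + x2 = y1 + y2) (hf : f x1 + f x2 = f y1 + f y2) : False := by
  have ha : x1 - y1 ≠ 0 := sub_ne_zero.mpr h11
  have e1 : f (y1 + (x1 - y1)) - f y1 = f x1 - f y1 := by
    rw [show y1 + (x1 - y1) = x1 by ring]
  have e2 : f (x2 + (x1 - y1)) - f x2 = f x1 - f y1 := by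
    rw [show x2 + (x1 - y1) = y2 by linear_combination hsum]
    linear_combination -hf
  exact h21.symm (pn_unique' hPN hDO ha (e1.trans e2.symm))

end PNDO
variable {m : ℕ}

theorem tr_zero : tr 3 m 0 = 0 := map_zero (Algebra.trace (ZMod 3) (GaloisField 3 m))

theorem tr_smul (r : ZMod 3) (y : GaloisField 3 m) : tr 3 m (r • y) = r * tr 3 m y := by
  unfold tr; rw [map_smul, smul_eq_mul]

theorem tr_add (x y : GaloisField 3 m) : tr 3 m (x + y) = tr 3 m x + tr 3 m y :=
  map_add (Algebra.trace (ZMod 3) (GaloisField 3 m)) x y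

theorem tr_sum {ι : Type*} (s : Finset ι) (g : ι → GaloisField 3 m) :
    tr 3 m (∑ i ∈ s, g i) = ∑ i ∈ s, tr 3 m (g i) :=
  map_sum (Algebra.trace (ZMod 3) (GaloisField 3 m)) g s

theorem tr_nondeg {a : GaloisField 3 m} (h : ∀ y, tr 3 m (a * y) = 0) : a = 0 :=
  (traceForm_nondegenerate (ZMod 3) (GaloisField 3 m)).1 a h

theorem tr_dual (φ : GaloisField 3 m →ₗ[ZMod 3] ZMod 3) :
    ∃ a : GaloisField 3 m, ∀ y, φ y = tr 3 m (a * y) := by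
  obtain ⟨a, ha⟩ := (LinearMap.BilinForm.toDual (Algebra.traceForm (ZMod 3) (GaloisField 3 m))
    (traceForm_nondegenerate (ZMod 3) (GaloisField 3 m))).surjective φ
  exact ⟨a, fun y => by rw [← ha]; rfl⟩

section
variable (f : GaloisField 3 m → GaloisField 3 m)

theorem mem_pDual_iff (v : GaloisField 3 m → ZMod 3) :
    v ∈ pDual 3 m f ↔
      (∑ x, v x • f x = 0 ∧ ∑ x, v x • x = 0 ∧ ∑ x, v x = 0) := by
  constructor
  · intro h
    have h3 : ∑ x, v x = 0 := by
      have := h 0 0 1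
      simpa [pWord, tr_zero] using this
    have key : ∀ a b : GaloisField 3 m,
        tr 3 m (a * ∑ x, v x • f x + b * ∑ x, v x • x) = 0 := by
      intro a b
      have := h a b 0
      simp only [pWord, add_zero] at this
      rw [Finset.mul_sum, Finset.mul_sum, ← Finset.sum_add_distrib, tr_sum]
      rw [← this]
      refine Finset.sum_congr rfl fun x _ => ?_
      rw [← tr_smul, smul_add, mul_smul_comm, mul_smul_comm]
    have h1 : ∑ x, v x • f x = 0 := by
      apply tr_nondeg (a := ∑ x, v x • f x)
      intro y
      have := key y 0
      rw [zero_mul, add_zero, mul_comm] at this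
      exact this
    have h2 : ∑ x, v x • x = 0 := by
      apply tr_nondeg (a := ∑ x, v x • x)
      intro y
      have := key 0 y
      rw [zero_mul, zero_add, mul_comm] at this
      exact this
    exact ⟨h1, h2, h3⟩
  · rintro ⟨h1, h2, h3⟩ a b c
    have : ∀ x, v x * pWord 3 m f a b c x = tr 3 m (a * (v x • f x) + b * (v x • x)) + v x * c := by
      intro x
      simp only [pWord]
      rw [mul_add, ← tr_smul, smul_add, mul_smul_comm, mul_smul_comm]
    simp only [this]
    rw [Finset.sum_add_distrib, ← tr_sum]
    rw [show (∑ i, (a * (v i • f i) + b * (v i • i)))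
        = a * ∑ x, v x • f x + b * ∑ x, v x • x by
      rw [Finset.sum_add_distrib, Finset.mul_sum, Finset.mul_sum]]
    rw [h1, h2, mul_zero, mul_zero, add_zero, tr_zero, ← Finset.sum_mul, h3, zero_mul, add_zero]
end

section Phi
variable (f : GaloisField 3 m → GaloisField 3 m)

def Phi : (GaloisField 3 m → ZMod 3) →ₗ[ZMod 3]
    (GaloisField 3 m × GaloisField 3 m × ZMod 3) where
  toFun v := (∑ x, v x • f x, ∑ x, v x • x, ∑ x, v x)
  map_add' u v := by
    simp only [Pi.add_apply, add_smul, Finset.sum_add_distrib, Prod.mk_add_mk]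
  map_smul' c v := by
    simp only [Pi.smul_apply, smul_eq_mul, mul_smul, ← Finset.smul_sum, RingHom.id_apply,
      Prod.smul_mk, Finset.mul_sum]

theorem pDual_eq_ker : pDual 3 m f = ↑(LinearMap.ker (Phi f)) := by
  ext v
  rw [mem_pDual_iff f v, SetLike.mem_coe, LinearMap.mem_ker]
  simp [Phi, Prod.ext_iff, and_assoc]

end Phi

section Surj
variable {f : GaloisField 3 m → GaloisField 3 m} {δ : Fin m → Fin m → GaloisField 3 m}
variable (hPN : ∀ a : GaloisField 3 m, a ≠ 0 → ∀ b : GaloisField 3 m,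
      ∃! x : GaloisField 3 m, f (x + a) - f x = b)
variable (hDO : ∀ x, f x = ∑ i : Fin m, ∑ j : Fin m, δ i j * x ^ (3 ^ (i : ℕ) + 3 ^ (j : ℕ)))
include hPN hDO

theorem Phi_surj : LinearMap.range (Phi f) = ⊤ := by
  by_contra hne
  obtain ⟨φ, hφ0, hφ⟩ := Submodule.exists_dual_map_eq_bot_of_lt_top
    (lt_of_le_of_ne le_top hne) inferInstance
  have hker : ∀ v, φ (Phi f v) = 0 := by
    intro v
    have h1 : Phi f v ∈ LinearMap.range (Phi f) := ⟨v, rfl⟩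
    have h2 := Submodule.mem_map_of_mem (f := φ) h1
    rw [hφ] at h2
    exact (Submodule.mem_bot _).mp h2
  obtain ⟨a, ha⟩ := tr_dual (φ ∘ₗ LinearMap.inl (ZMod 3) _ _)
  obtain ⟨b, hb⟩ := tr_dual (φ ∘ₗ ((LinearMap.inr (ZMod 3) (GaloisField 3 m)
      (GaloisField 3 m × ZMod 3)) ∘ₗ LinearMap.inl (ZMod 3) _ _))
  set c := φ (0, 0, 1) with hcdef
  have hdec : ∀ s t u, φ (s, t, u) = tr 3 m (a * s) + tr 3 m (b * t) + u * c := by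
    intro s t u
    have hsplit : (s, t, u) = (s, (0:GaloisField 3 m), (0:ZMod 3))
        + ((0, t, 0) + (u • ((0:GaloisField 3 m), (0:GaloisField 3 m), (1:ZMod 3)))) := by
      simp [Prod.ext_iff]
    rw [hsplit, map_add, map_add, map_smul]
    have e1 : φ (s, 0, 0) = tr 3 m (a * s) := ha s
    have e2 : φ (0, t, 0) = tr 3 m (b * t) := hb t
    rw [e1, e2, smul_eq_mul, ← hcdef]
    ring
  have hword : ∀ x, tr 3 m (a * f x) + tr 3 m (b * x) + c = 0 := by
    intro x
    have hv := hker (fun y => if y = x then 1 else 0)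
    have hPhi : Phi f (fun y => if y = x then (1 : ZMod 3) else 0) = (f x, x, 1) := by
      simp only [Phi, LinearMap.coe_mk, AddHom.coe_mk, Prod.ext_iff]
      refine ⟨?_, ?_, ?_⟩ <;>
        simp [ite_smul, Finset.sum_ite_eq']
    rw [hPhi, hdec] at hv
    rw [one_mul] at hv
    exact hv
  have hc : c = 0 := by
    have h0 := hword 0
    rw [f_zero hDO, mul_zero, mul_zero, tr_zero] at h0
    simpa using h0
  obtain ⟨u₀, hu₀⟩ := exists_ne (0 : GaloisField 3 m)
  have hBx : ∀ x, tr 3 m (a * Bf δ x u₀) = 0 := by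
    intro x
    have h1 := hword (x + u₀)
    have h2 := hword x
    have h3 := hword u₀
    rw [f_add hDO] at h1
    have e1 : tr 3 m (a * (f x + f u₀ + Bf δ x u₀))
        = tr 3 m (a * f x) + tr 3 m (a * f u₀) + tr 3 m (a * Bf δ x u₀) := by
      rw [mul_add, mul_add, tr_add, tr_add]
    have e2 : tr 3 m (b * (x + u₀)) = tr 3 m (b * x) + tr 3 m (b * u₀) := by
      rw [mul_add, tr_add]
    rw [e1, e2] at h1
    linear_combination h1 - h2 - h3 + hc
  have ha0 : a = 0 := by
    apply tr_nondeg
    intro z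
    obtain ⟨w, hw⟩ := B_surj hPN hDO hu₀ z
    rw [← hw]
    exact hBx w
  have hb0 : b = 0 := by
    apply tr_nondeg
    intro z
    have hz := hword z
    rw [ha0, zero_mul, tr_zero, hc] at hz
    linear_combination hz
  apply hφ0
  apply LinearMap.ext
  rintro ⟨s, t, u⟩
  rw [hdec, ha0, hb0, hc, zero_mul, zero_mul, tr_zero, mul_zero]
  simp

end Surj

section Card
variable {f : GaloisField 3 m → GaloisField 3 m} {δ : Fin m → Fin m → GaloisField 3 m}
variable (hPN : ∀ a : GaloisField 3 m, a ≠ 0 → ∀ b : GaloisField 3 m,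
      ∃! x : GaloisField 3 m, f (x + a) - f x = b)
variable (hDO : ∀ x, f x = ∑ i : Fin m, ∑ j : Fin m, δ i j * x ^ (3 ^ (i : ℕ) + 3 ^ (j : ℕ)))
include hPN hDO

theorem card_pDual (hm : 1 < m) : Set.ncard (pDual 3 m f) = 3 ^ (3 ^ m - 2 * m - 1) := by
  have hm0 : m ≠ 0 := by omega
  rw [pDual_eq_ker]
  have h1 : Set.ncard (↑(LinearMap.ker (Phi f)) : Set (GaloisField 3 m → ZMod 3))
      = Nat.card (LinearMap.ker (Phi f)) := rfl
  haveI : Fintype (LinearMap.ker (Phi f)) := Fintype.ofFinite _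
  rw [h1, Nat.card_eq_fintype_card, Module.card_eq_pow_finrank (K := ZMod 3), ZMod.card]
  congr 1
  have hrn := LinearMap.finrank_range_add_finrank_ker (Phi f)
  rw [Phi_surj hPN hDO, finrank_top] at hrn
  have hprod : Module.finrank (ZMod 3) (GaloisField 3 m × GaloisField 3 m × ZMod 3)
      = 2 * m + 1 := by
    rw [Module.finrank_prod, Module.finrank_prod, Module.finrank_self,
      GaloisField.finrank 3 hm0]
    ring
  have hdom : Module.finrank (ZMod 3) (GaloisField 3 m → ZMod 3) = 3 ^ m := by
    rw [Module.finrank_fintype_fun_eq_card, ← Nat.card_eq_fintype_card, GaloisField.card 3 m hm0]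
  rw [hprod, hdom] at hrn
  omega

end Card

theorem two_smul_neg (y : GaloisField 3 m) : (2 : ZMod 3) • y = -y := by
  rw [Algebra.smul_def, map_ofNat]
  linear_combination y * three_eq_zero

theorem zmod3_cases : ∀ r : ZMod 3, r ≠ 1 → r ≠ 2 → r = 0 := by decide

theorem sum_decomp (v : GaloisField 3 m → ZMod 3) (g : GaloisField 3 m → GaloisField 3 m) :
    ∑ x, v x • g x = (∑ x ∈ Finset.univ.filter (fun x => v x = 1), g x)
      - ∑ x ∈ Finset.univ.filter (fun x => v x = 2), g x := by
  classical
  set P := Finset.univ.filter (fun x => v x = 1) with hP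
  set N := Finset.univ.filter (fun x => v x = 2) with hN
  have hdisj : Disjoint P N := by
    rw [Finset.disjoint_left]
    intro x hxP hxN
    rw [hP, Finset.mem_filter] at hxP
    rw [hN, Finset.mem_filter] at hxN
    rw [hxP.2] at hxN
    exact absurd hxN.2 (by decide)
  have hzero : ∀ x ∈ Finset.univ, x ∉ P ∪ N → v x • g x = 0 := by
    intro x _ hx
    rw [Finset.mem_union, hP, hN, Finset.mem_filter, Finset.mem_filter] at hx
    push_neg at hx
    have h0 : v x = 0 := by
      rcases hx with ⟨hx1, hx2⟩
      exact zmod3_cases _ (hx1 (Finset.mem_univ x)) (hx2 (Finset.mem_univ x))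
    rw [h0, zero_smul]
  rw [← Finset.sum_subset (Finset.subset_univ (P ∪ N)) hzero, Finset.sum_union hdisj]
  have hPsum : ∑ x ∈ P, v x • g x = ∑ x ∈ P, g x := by
    refine Finset.sum_congr rfl fun x hx => ?_
    rw [hP, Finset.mem_filter] at hx
    rw [hx.2, one_smul]
  have hNsum : ∑ x ∈ N, v x • g x = ∑ x ∈ N, (- g x) := by
    refine Finset.sum_congr rfl fun x hx => ?_
    rw [hN, Finset.mem_filter] at hx
    rw [hx.2, two_smul_neg]
  rw [hPsum, hNsum, Finset.sum_neg_distrib]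
  ring

theorem count_decomp (v : GaloisField 3 m → ZMod 3) :
    (∑ x, v x) = ((Finset.univ.filter (fun x => v x = 1)).card : ZMod 3)
      + 2 * ((Finset.univ.filter (fun x => v x = 2)).card : ZMod 3) := by
  classical
  set P := Finset.univ.filter (fun x => v x = 1) with hP
  set N := Finset.univ.filter (fun x => v x = 2) with hN
  have hdisj : Disjoint P N := by
    rw [Finset.disjoint_left]
    intro x hxP hxN
    rw [hP, Finset.mem_filter] at hxP
    rw [hN, Finset.mem_filter] at hxN
    rw [hxP.2] at hxN
    exact absurd hxN.2 (by decide)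
  have hzero : ∀ x ∈ Finset.univ, x ∉ P ∪ N → v x = 0 := by
    intro x _ hx
    rw [Finset.mem_union, hP, hN, Finset.mem_filter, Finset.mem_filter] at hx
    push_neg at hx
    rcases hx with ⟨hx1, hx2⟩
    exact zmod3_cases _ (hx1 (Finset.mem_univ x)) (hx2 (Finset.mem_univ x))
  rw [← Finset.sum_subset (Finset.subset_univ (P ∪ N)) hzero, Finset.sum_union hdisj]
  have hPsum : ∑ x ∈ P, v x = (P.card : ZMod 3) := by
    rw [Finset.sum_congr rfl (fun x hx => (Finset.mem_filter.mp hx).2), Finset.sum_const,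
      nsmul_eq_mul, mul_one]
  have hNsum : ∑ x ∈ N, v x = 2 * (N.card : ZMod 3) := by
    rw [Finset.sum_congr rfl (fun x hx => (Finset.mem_filter.mp hx).2), Finset.sum_const,
      nsmul_eq_mul, mul_comm]
  rw [hPsum, hNsum]

section Dist
variable {f : GaloisField 3 m → GaloisField 3 m} {δ : Fin m → Fin m → GaloisField 3 m}
variable (hPN : ∀ a : GaloisField 3 m, a ≠ 0 → ∀ b : GaloisField 3 m,
      ∃! x : GaloisField 3 m, f (x + a) - f x = b)
variable (hDO : ∀ x, f x = ∑ i : Fin m, ∑ j : Fin m, δ i j * x ^ (3 ^ (i : ℕ) + 3 ^ (j : ℕ)))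
include hPN hDO

theorem dist_ge (v : GaloisField 3 m → ZMod 3) (hv : v ∈ pDual 3 m f) (hv0 : v ≠ 0) :
    5 ≤ hammingNorm v := by
  classical
  obtain ⟨S2, S1, S0⟩ := (mem_pDual_iff f v).mp hv
  set P := Finset.univ.filter (fun x => v x = 1) with hP
  set N := Finset.univ.filter (fun x => v x = 2) with hN
  have hdisj : Disjoint P N := by
    rw [Finset.disjoint_left]
    intro x hxP hxN
    rw [hP, Finset.mem_filter] at hxP
    rw [hN, Finset.mem_filter] at hxN
    rw [hxP.2] at hxN
    exact absurd hxN.2 (by decide)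
  have hnorm : hammingNorm v = P.card + N.card := by
    rw [← Finset.card_union_of_disjoint hdisj]
    have hset : Finset.univ.filter (fun x => v x ≠ 0) = P ∪ N := by
      ext x
      simp only [hP, hN, Finset.mem_union, Finset.mem_filter, Finset.mem_univ, true_and]
      constructor
      · intro hx
        by_contra hcon
        push_neg at hcon
        exact hx (zmod3_cases _ hcon.1 hcon.2)
      · rintro (h | h) <;> rw [h] <;> decide
    rw [show hammingNorm v = (Finset.univ.filter (fun x => v x ≠ 0)).card from rfl, hset]
  have E1 : ∑ x ∈ P, x = ∑ x ∈ N, x := by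
    have hd := sum_decomp v id
    simp only [id_eq] at hd
    rw [S1] at hd
    rw [hP, hN]
    linear_combination -hd
  have E2 : ∑ x ∈ P, f x = ∑ x ∈ N, f x := by
    have hd := sum_decomp v f
    rw [S2] at hd
    rw [hP, hN]
    linear_combination -hd
  have E0 : (3 : ℕ) ∣ P.card + 2 * N.card := by
    rw [← ZMod.natCast_eq_zero_iff]
    push_cast
    have hd := count_decomp v
    rw [S0] at hd
    rw [hP, hN]
    linear_combination -hd
  have hpos : 1 ≤ P.card + N.card := by
    rcases Function.ne_iff.mp hv0 with ⟨x, hx⟩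
    have : x ∈ P ∪ N := by
      rw [Finset.mem_union, hP, hN, Finset.mem_filter, Finset.mem_filter]
      by_contra hcon
      push_neg at hcon
      exact hx (zmod3_cases _ (hcon.1 (Finset.mem_univ x)) (hcon.2 (Finset.mem_univ x)))
    calc 1 ≤ (P ∪ N).card := Finset.card_pos.mpr ⟨x, this⟩
    _ ≤ P.card + N.card := Finset.card_union_le P N
  by_contra hlt
  push_neg at hlt
  have hle : P.card + N.card ≤ 4 := by omega
  have hcases : (P.card = 1 ∧ N.card = 1) ∨ (P.card = 2 ∧ N.card = 2)
      ∨ (P.card = 3 ∧ N.card = 0) ∨ (P.card = 0 ∧ N.card = 3) := by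
    obtain ⟨k, hk⟩ := E0
    omega
  have memP : ∀ x ∈ P, v x = 1 := fun x hx => (Finset.mem_filter.mp hx).2
  have memN : ∀ x ∈ N, v x = 2 := fun x hx => (Finset.mem_filter.mp hx).2
  have hPN' : ∀ x ∈ P, ∀ y ∈ N, x ≠ y := by
    intro x hx y hy hxy
    have := memP x hx
    rw [hxy, memN y hy] at this
    exact absurd this (by decide)
  rcases hcases with ⟨hp, hn⟩ | ⟨hp, hn⟩ | ⟨hp, hn⟩ | ⟨hp, hn⟩
  · obtain ⟨x, hPx⟩ := Finset.card_eq_one.mp hp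
    obtain ⟨y, hNy⟩ := Finset.card_eq_one.mp hn
    rw [hPx, hNy, Finset.sum_singleton, Finset.sum_singleton] at E1
    exact hPN' x (by rw [hPx]; exact Finset.mem_singleton_self x)
      y (by rw [hNy]; exact Finset.mem_singleton_self y) E1
  · obtain ⟨x1, x2, hx12, hPx⟩ := Finset.card_eq_two.mp hp
    obtain ⟨y1, y2, hy12, hNy⟩ := Finset.card_eq_two.mp hn
    have hx1P : x1 ∈ P := by rw [hPx]; simp
    have hx2P : x2 ∈ P := by rw [hPx]; simp
    have hy1N : y1 ∈ N := by rw [hNy]; simp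
    have hy2N : y2 ∈ N := by rw [hNy]; simp
    rw [hPx, hNy, Finset.sum_pair hx12, Finset.sum_pair hy12] at E1 E2
    exact four_case hPN hDO hx12 (hPN' x1 hx1P y1 hy1N) (hPN' x1 hx1P y2 hy2N)
      (hPN' x2 hx2P y1 hy1N) (hPN' x2 hx2P y2 hy2N) E1 E2
  · obtain ⟨x, y, z, hxy, hxz, hyz, hPx⟩ := Finset.card_eq_three.mp hp
    have hN0 : N = ∅ := Finset.card_eq_zero.mp hn
    rw [hPx, hN0, Finset.sum_empty] at E1 E2
    rw [Finset.sum_insert (by simp [hxy, hxz]), Finset.sum_pair hyz] at E1 E2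
    exact three_zero hPN hDO (x := x) (y := y) (z := z)
      (by linear_combination E1) (by linear_combination E2) hxy
  · obtain ⟨x, y, z, hxy, hxz, hyz, hNx⟩ := Finset.card_eq_three.mp hn
    have hP0 : P = ∅ := Finset.card_eq_zero.mp hp
    rw [hNx, hP0, Finset.sum_empty] at E1 E2
    rw [Finset.sum_insert (by simp [hxy, hxz]), Finset.sum_pair hyz] at E1 E2
    exact three_zero hPN hDO (x := x) (y := y) (z := z)
      (by linear_combination -E1) (by linear_combination -E2) hxy

end Dist

section Exists5
variable {f : GaloisField 3 m → GaloisField 3 m} {δ : Fin m → Fin m → GaloisField 3 m}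
variable (hPN : ∀ a : GaloisField 3 m, a ≠ 0 → ∀ b : GaloisField 3 m,
      ∃! x : GaloisField 3 m, f (x + a) - f x = b)
variable (hDO : ∀ x, f x = ∑ i : Fin m, ∑ j : Fin m, δ i j * x ^ (3 ^ (i : ℕ) + 3 ^ (j : ℕ)))
include hPN hDO

theorem exists_five (hm : 1 < m) : ∃ v ∈ pDual 3 m f, hammingNorm v = 5 := by
  classical
  have hm0 : m ≠ 0 := by omega
  obtain ⟨u, hu⟩ := exists_ne (0 : GaloisField 3 m)
  -- find v outside {0, u, -u}
  have hcard : 3 < Fintype.card (GaloisField 3 m) := by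
    rw [← Nat.card_eq_fintype_card, GaloisField.card 3 m hm0]
    calc 3 < 3 ^ 2 := by norm_num
    _ ≤ 3 ^ m := Nat.pow_le_pow_right (by norm_num) hm
  obtain ⟨v, hv⟩ : ∃ v : GaloisField 3 m, v ∉ ({0, u, -u} : Finset (GaloisField 3 m)) := by
    by_contra hcon
    push_neg at hcon
    have hsub : (Finset.univ : Finset (GaloisField 3 m)) ⊆ {0, u, -u} :=
      fun x _ => hcon x
    have := Finset.card_le_card hsub
    rw [Finset.card_univ] at this
    have h3 : ({0, u, -u} : Finset (GaloisField 3 m)).card ≤ 3 := by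
      apply le_trans (Finset.card_insert_le _ _)
      apply Nat.succ_le_succ
      apply le_trans (Finset.card_insert_le _ _)
      simp
    omega
  simp only [Finset.mem_insert, Finset.mem_singleton, not_or] at hv
  obtain ⟨hv0, hvu, hvnu⟩ := hv
  have huv : u + v ≠ 0 := fun h => hvnu (by linear_combination h)
  have hune : u ≠ v := fun h => hvu h.symm
  obtain ⟨w, hw⟩ := B_surj hPN hDO huv (- Bf δ u v)
  -- distinctness
  have hw0 : w ≠ 0 := by
    intro h
    rw [h] at hw
    have h1 : Bf δ (0 : GaloisField 3 m) (u + v) = 0 := by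
      rw [Bf_symm, Bf_zero_right]
    rw [h1] at hw
    have h2 : Bf δ u v = 0 := by linear_combination hw
    exact hu (B_ker hPN hDO hv0 h2)
  have hwu : w ≠ u := by
    intro h
    rw [h] at hw
    have e := Bf_add_right δ u u v
    have h2 : Bf δ u (u - v) = 0 := by
      rw [sub_eq_add_neg, Bf_add_right, Bf_neg_right]
      linear_combination hw - e - Bf δ u v * three_eq_zero
    exact hu (B_ker hPN hDO (sub_ne_zero.mpr hune) h2)
  have hwv : w ≠ v := by
    intro h
    rw [h] at hw
    have e := Bf_add_right δ v u v
    have h2 : Bf δ v (v - u) = 0 := by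
      rw [sub_eq_add_neg, Bf_add_right, Bf_neg_right]
      linear_combination hw - e - Bf_symm δ u v - Bf δ v u * three_eq_zero
    exact hv0 (B_ker hPN hDO (sub_ne_zero.mpr hune.symm) h2)
  set s : GaloisField 3 m := u + v + w with hs
  have hs0 : s ≠ 0 := by
    intro h
    have hww : w = -(u + v) := by rw [hs] at h; linear_combination h
    rw [hww] at hw
    have e1 := Bf_symm δ (-(u+v)) (u+v)
    have e2 := Bf_neg_right δ (u+v) (u+v)
    have e3 := Bf_self hPN hDO (u+v)
    have e4 := f_add hDO u v
    have e5 : f (u - v) = f u + f v - Bf δ u v := by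
      rw [sub_eq_add_neg, f_add hDO, f_neg hDO, Bf_neg_right]
      ring
    have h3 : f (u - v) = 0 := by
      linear_combination e5 - e4 + e3 - e2 - e1 + hw - Bf δ u v * three_eq_zero
    exact f_ne hPN hDO (sub_ne_zero.mpr hune) h3
  have hsu : s ≠ u := by
    intro h
    have hww : w = -v := by rw [hs] at h; linear_combination h
    rw [hww] at hw
    have e1 := Bf_add_right δ (-v) u v
    have e2 := Bf_symm δ (-v) u
    have e3 := Bf_neg_right δ u v
    have e4 := Bf_symm δ (-v) v
    have e5 := Bf_neg_right δ v v
    have e6 := Bf_self hPN hDO v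
    have h3 : f v = 0 := by
      linear_combination hw - e1 - e2 - e3 - e4 - e5 + e6
    exact f_ne hPN hDO hv0 h3
  have hsv : s ≠ v := by
    intro h
    have hww : w = -u := by rw [hs] at h; linear_combination h
    rw [hww] at hw
    have e1 := Bf_add_right δ (-u) u v
    have e2 := Bf_symm δ (-u) u
    have e3 := Bf_neg_right δ u u
    have e4 := Bf_self hPN hDO u
    have e5 := Bf_symm δ (-u) v
    have e6 := Bf_neg_right δ v u
    have e7 := Bf_symm δ v u
    have h3 : f u = 0 := by
      linear_combination hw - e1 - e2 - e3 + e4 - e5 - e6 + e7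
    exact f_ne hPN hDO hu h3
  have hsw : s ≠ w := by
    intro h
    rw [hs] at h
    exact huv (by linear_combination h)
  set v₀ : GaloisField 3 m → ZMod 3 := fun x =>
    (if x = 0 then 1 else 0) + (if x = u then 1 else 0) + (if x = v then 1 else 0)
      + (if x = w then 1 else 0) + (if x = s then 2 else 0) with hv₀
  have hsum : ∀ g : GaloisField 3 m → GaloisField 3 m,
      ∑ x, v₀ x • g x = g 0 + g u + g v + g w + (2 : ZMod 3) • g s := by
    intro g
    simp only [hv₀, add_smul, Finset.sum_add_distrib, ite_smul, zero_smul, one_smul,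
      Finset.sum_ite_eq', Finset.mem_univ, if_true]
  have hfs : f s = f u + f v + f w := by
    have e1 := f_add hDO (u + v) w
    have e2 := f_add hDO u v
    have e3 := Bf_symm δ (u + v) w
    rw [hs]
    linear_combination e1 + e2 + e3 + hw
  have S2' : ∑ x, v₀ x • f x = 0 := by
    rw [hsum f, f_zero hDO, two_smul_neg, hfs]
    ring
  have S1' : ∑ x, v₀ x • x = 0 := by
    rw [hsum (fun x => x), two_smul_neg, hs]
    ring
  have S0' : ∑ x, v₀ x = 0 := by
    simp only [hv₀, Finset.sum_add_distrib, Finset.sum_ite_eq', Finset.mem_univ, if_true]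
    decide
  refine ⟨v₀, (mem_pDual_iff f v₀).mpr ⟨S2', S1', S0'⟩, ?_⟩
  have hfilter : Finset.univ.filter (fun x => v₀ x ≠ 0) = {0, u, v, w, s} := by
    ext x
    simp only [Finset.mem_filter, Finset.mem_univ, true_and, Finset.mem_insert,
      Finset.mem_singleton]
    constructor
    · intro hx
      by_contra hcon
      push_neg at hcon
      obtain ⟨h1, h2, h3, h4, h5⟩ := hcon
      simp [hv₀, h1, h2, h3, h4, h5] at hx
    · rintro (rfl | rfl | rfl | rfl | rfl)
      · simp [hv₀, Ne.symm hu, Ne.symm hv0, Ne.symm hw0, Ne.symm hs0]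
      · simp [hv₀, hu, hune, Ne.symm hwu, Ne.symm hsu]
      · simp [hv₀, hv0, hvu, Ne.symm hwv, Ne.symm hsv]
      · simp [hv₀, hw0, hwu, hwv, Ne.symm hsw]
      · intro hcon
        simp only [hv₀, if_neg hs0, if_neg hsu, if_neg hsv, if_neg hsw, if_pos rfl] at hcon
        exact absurd hcon (by decide)
  rw [show hammingNorm v₀ = (Finset.univ.filter (fun x => v₀ x ≠ 0)).card from rfl, hfilter]
  rw [Finset.card_insert_of_notMem (by
      simp [Ne.symm hu, Ne.symm hv0, Ne.symm hw0, Ne.symm hs0]),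
    Finset.card_insert_of_notMem (by
      simp [hune, Ne.symm hwu, Ne.symm hsu]),
    Finset.card_insert_of_notMem (by
      simp [Ne.symm hwv, Ne.symm hsv]),
    Finset.card_insert_of_notMem (by
      simp [Ne.symm hsw]),
    Finset.card_singleton]

end Exists5

/-- For `p = 3`, `m > 1` and `f` a PN-DO function on `F_{3^m}`,
the dual `C̄_f^⊥` of the punctured code is a ternary `[3^m, 3^m−2m−1, 5]` code:
it has `3^(3^m−2m−1)` elements (dimension `3^m − 2m − 1`) and minimum Hamming
distance exactly `5`. -/
theorem stmt_10 (m : ℕ) (hm : 1 < m)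
    (f : GaloisField 3 m → GaloisField 3 m)
    (hPN : ∀ a : GaloisField 3 m, a ≠ 0 → ∀ b : GaloisField 3 m,
      ∃! x : GaloisField 3 m, f (x + a) - f x = b)
    (δ : Fin m → Fin m → GaloisField 3 m)
    (hDO : ∀ x, f x = ∑ i : Fin m, ∑ j : Fin m, δ i j * x ^ (3 ^ (i : ℕ) + 3 ^ (j : ℕ))) :
    Set.ncard (pDual 3 m f) = 3 ^ (3 ^ m - 2 * m - 1) ∧
    (∀ v ∈ pDual 3 m f, v ≠ 0 → 5 ≤ hammingNorm v) ∧
    (∃ v ∈ pDual 3 m f, hammingNorm v = 5) := by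
  exact ⟨card_pDual hPN hDO hm, fun v hv hv0 => dist_ge hPN hDO v hv hv0,
    exists_five hPN hDO hm⟩
end
end

section
/- Let p ≥ 5 be a prime, m a positive integer, and let f : F_{p^m} → F_{p^m} be a PN-DO function. Then the dual code C̄_f^⊥ of the punctured code C̄_f ⊆ F_p^{p^m} has dimension p^m − 2m − 1 over F_p and minimum Hamming distance exactly 4; that is, C̄_f^⊥ is a [p^m, p^m−2m−1, 4] code over F_p. -/
noncomputable section
open scoped Classical

namespace Stmt11Aux

variable {p m : ℕ} [Fact p.Prime]

local notation "K" => GaloisField p m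

/-- associated bilinear-form-like function of a DO polynomial. -/
def Bf (δ : Fin m → Fin m → GaloisField p m) (x y : GaloisField p m) : GaloisField p m :=
  ∑ i : Fin m, ∑ j : Fin m,
    δ i j * (x ^ p ^ (i : ℕ) * y ^ p ^ (j : ℕ) + x ^ p ^ (j : ℕ) * y ^ p ^ (i : ℕ))

lemma alg_pow (c : ZMod p) (i : ℕ) :
    (algebraMap (ZMod p) K c) ^ p ^ i = algebraMap (ZMod p) K c := by
  rw [← map_pow]
  congr 1
  induction i with
  | zero => simp
  | succ n ih => rw [pow_succ, pow_mul, ih, ZMod.pow_card]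

variable {f : GaloisField p m → GaloisField p m} {δ : Fin m → Fin m → GaloisField p m}

lemma B_smul (c : ZMod p) (x y : K) : Bf δ x (c • y) = c • Bf δ x y := by
  rw [Bf, Bf, Finset.smul_sum]
  refine Finset.sum_congr rfl fun i _ => ?_
  rw [Finset.smul_sum]
  refine Finset.sum_congr rfl fun j _ => ?_
  rw [Algebra.smul_def, mul_pow, mul_pow, alg_pow, alg_pow, Algebra.smul_def]
  ring

section DO

variable (hDO : ∀ x, f x = ∑ i : Fin m, ∑ j : Fin m, δ i j * x ^ (p ^ (i : ℕ) + p ^ (j : ℕ)))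
include hDO

lemma f_zero : f 0 = 0 := by
  have hp := (Fact.out : p.Prime).pos
  rw [hDO]
  refine Finset.sum_eq_zero fun i _ => Finset.sum_eq_zero fun j _ => ?_
  rw [zero_pow (by positivity), mul_zero]

lemma B_eq (x y : K) : f (x + y) = f x + f y + Bf δ x y := by
  rw [hDO, hDO, hDO, Bf]
  rw [← Finset.sum_add_distrib, ← Finset.sum_add_distrib]
  refine Finset.sum_congr rfl fun i _ => ?_
  rw [← Finset.sum_add_distrib, ← Finset.sum_add_distrib]
  refine Finset.sum_congr rfl fun j _ => ?_
  rw [pow_add, pow_add, pow_add, add_pow_char_pow, add_pow_char_pow]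
  ring

lemma f_smul (c : ZMod p) (x : K) : f (c • x) = (c * c) • f x := by
  rw [hDO, hDO, Finset.smul_sum]
  refine Finset.sum_congr rfl fun i _ => ?_
  rw [Finset.smul_sum]
  refine Finset.sum_congr rfl fun j _ => ?_
  rw [Algebra.smul_def, Algebra.smul_def, map_mul, mul_pow, pow_add,
    alg_pow, alg_pow, pow_add]
  ring

end DO

section PN

variable (hPN : ∀ a : GaloisField p m, a ≠ 0 → ∀ b : GaloisField p m,
      ∃! x : GaloisField p m, f (x + a) - f x = b)
variable (hDO : ∀ x, f x = ∑ i : Fin m, ∑ j : Fin m, δ i j * x ^ (p ^ (i : ℕ) + p ^ (j : ℕ)))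
include hPN hDO

lemma B_nondeg {x a : K} (ha : a ≠ 0) (hB : Bf δ x a = 0) : x = 0 := by
  obtain ⟨z, hz, huniq⟩ := hPN a ha (f a)
  have h1 : f (x + a) - f x = f a := by
    rw [B_eq hDO, hB]; ring
  have h0 : f (0 + a) - f 0 = f a := by
    rw [zero_add, f_zero hDO, sub_zero]
  exact (huniq x h1).trans (huniq 0 h0).symm

lemma f_ne_zero {a : K} (ha : a ≠ 0) : f a ≠ 0 := by
  intro h
  apply ha
  refine B_nondeg hPN hDO ha ?_
  have hB : Bf δ a a = f (a + a) - f a - f a := by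
    rw [B_eq hDO]; ring
  have h2 : a + a = (2 : ZMod p) • a := (two_smul (ZMod p) a).symm
  rw [hB, h2, f_smul hDO, h, smul_zero, sub_zero, sub_zero]

end PN

/-! ### trace facts -/

lemma tr_add (x y : K) : tr p m (x + y) = tr p m x + tr p m y :=
  map_add (Algebra.trace (ZMod p) (GaloisField p m)) x y

lemma tr_sub (x y : K) : tr p m (x - y) = tr p m x - tr p m y :=
  map_sub (Algebra.trace (ZMod p) (GaloisField p m)) x y

lemma tr_smul (c : ZMod p) (x : K) : tr p m (c • x) = c * tr p m x := by
  have := map_smul (Algebra.trace (ZMod p) (GaloisField p m)) c x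
  simpa [tr, smul_eq_mul] using this

lemma tr_nondeg {y : K} (h : ∀ x, tr p m (y * x) = 0) : y = 0 := by
  refine (traceForm_nondegenerate (ZMod p) (GaloisField p m)).1 y fun x => ?_
  rw [Algebra.traceForm_apply]
  exact h x

lemma sum_mul_tr (v : K → ZMod p) (g : K → K) :
    ∑ x, v x * tr p m (g x) = tr p m (∑ x, v x • g x) := by
  show _ = Algebra.trace (ZMod p) (GaloisField p m) _
  rw [map_sum]
  exact Finset.sum_congr rfl fun x _ => (tr_smul (v x) (g x)).symm

/-! ### key injectivity of codewords -/

lemma word_inj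
    (hPN : ∀ a : GaloisField p m, a ≠ 0 → ∀ b : GaloisField p m,
      ∃! x : GaloisField p m, f (x + a) - f x = b)
    (hDO : ∀ x, f x = ∑ i : Fin m, ∑ j : Fin m, δ i j * x ^ (p ^ (i : ℕ) + p ^ (j : ℕ)))
    {a b : K} {c : ZMod p} (h : ∀ x, tr p m (a * f x + b * x) + c = 0) :
    a = 0 ∧ b = 0 ∧ c = 0 := by
  have hc : c = 0 := by
    have h0 := h 0
    rw [f_zero hDO, mul_zero, mul_zero, add_zero] at h0
    simpa [tr] using h0
  subst hc
  have h' : ∀ x, tr p m (a * f x + b * x) = 0 := fun x => by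
    have := h x; rwa [add_zero] at this
  have ha : a = 0 := by
    by_contra ha
    have key : ∀ d : K, tr p m d = 0 := by
      intro d
      obtain ⟨x, hx, -⟩ := hPN 1 one_ne_zero (a⁻¹ * (d - b))
      have hx' : a * (f (x + 1) - f x) = d - b := by
        rw [hx, ← mul_assoc, mul_inv_cancel₀ ha, one_mul]
      have e : a * f (x + 1) + b * (x + 1) - (a * f x + b * x) = d := by
        linear_combination hx'
      have h2 : tr p m d = tr p m (a * f (x + 1) + b * (x + 1))
          - tr p m (a * f x + b * x) := by
        rw [← tr_sub, e]
      rw [h2, h', h', sub_zero]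
    exact Algebra.trace_ne_zero (ZMod p) (GaloisField p m)
      (LinearMap.ext fun d => key d)
  subst ha
  refine ⟨rfl, tr_nondeg fun x => ?_, rfl⟩
  have := h' x
  rwa [zero_mul, zero_add] at this

/-! ### characterization of the dual -/

lemma mem_pDual_iff (f : GaloisField p m → GaloisField p m) (v : K → ZMod p) :
    v ∈ pDual p m f ↔
      (∑ x, v x = 0) ∧ (∑ x, v x • x = 0) ∧ (∑ x, v x • f x = 0) := by
  constructor
  · intro h
    have h1 : ∑ x, v x = 0 := by
      have := h 0 0 1
      simpa [pWord, tr] using this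
    refine ⟨h1, ?_, ?_⟩
    · refine tr_nondeg (y := ∑ x, v x • x) fun b => ?_
      have hb := h 0 b 0
      simp only [pWord, zero_mul, zero_add, add_zero] at hb
      rw [sum_mul_tr v (fun x => b * x)] at hb
      have e : b * ∑ x, v x • x = ∑ x, v x • (b * x) := by
        rw [Finset.mul_sum]
        exact Finset.sum_congr rfl fun x _ => mul_smul_comm (v x) b x
      rw [mul_comm, e]
      exact hb
    · refine tr_nondeg (y := ∑ x, v x • f x) fun a => ?_
      have hb := h a 0 0
      simp only [pWord, zero_mul, add_zero] at hb
      rw [sum_mul_tr v (fun x => a * f x)] at hb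
      have e : a * ∑ x, v x • f x = ∑ x, v x • (a * f x) := by
        rw [Finset.mul_sum]
        exact Finset.sum_congr rfl fun x _ => mul_smul_comm (v x) a (f x)
      rw [mul_comm, e]
      exact hb
  · rintro ⟨h1, h2, h3⟩ a b c
    have expand : ∀ x, v x * pWord p m f a b c x =
        v x * tr p m (a * f x) + v x * tr p m (b * x) + v x * c := by
      intro x
      rw [pWord, tr_add, mul_add, mul_add]
    rw [Finset.sum_congr rfl fun x _ => expand x]
    rw [Finset.sum_add_distrib, Finset.sum_add_distrib,
      sum_mul_tr v (fun x => a * f x), sum_mul_tr v (fun x => b * x),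
      ← Finset.sum_mul, h1, zero_mul, add_zero]
    have e2 : ∑ x, v x • (a * f x) = a * ∑ x, v x • f x := by
      rw [Finset.mul_sum]
      exact Finset.sum_congr rfl fun x _ => (mul_smul_comm (v x) a (f x)).symm
    have e3 : ∑ x, v x • (b * x) = b * ∑ x, v x • x := by
      rw [Finset.mul_sum]
      exact Finset.sum_congr rfl fun x _ => (mul_smul_comm (v x) b x).symm
    rw [e2, e3, h2, h3, mul_zero, mul_zero]
    simp [tr]

/-! ### the linear map whose kernel is the dual -/

def Tmap (f : GaloisField p m → GaloisField p m) :
    (GaloisField p m → ZMod p) →ₗ[ZMod p] (ZMod p × GaloisField p m × GaloisField p m) where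
  toFun v := (∑ x, v x, ∑ x, v x • x, ∑ x, v x • f x)
  map_add' u v := by
    simp only [Pi.add_apply, add_smul, Finset.sum_add_distrib, Prod.mk_add_mk]
  map_smul' c v := by
    simp only [Pi.smul_apply, smul_eq_mul, RingHom.id_apply, Prod.smul_mk, mul_smul,
      Finset.smul_sum, Prod.mk.injEq]
    refine ⟨by rw [Finset.mul_sum], by simp⟩

lemma Tmap_apply (f : GaloisField p m → GaloisField p m) (v : K → ZMod p) :
    Tmap f v = (∑ x, v x, ∑ x, v x • x, ∑ x, v x • f x) := rfl

lemma pDual_eq_ker (f : GaloisField p m → GaloisField p m) :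
    pDual p m f = ↑(LinearMap.ker (Tmap f)) := by
  ext v
  rw [SetLike.mem_coe, LinearMap.mem_ker, mem_pDual_iff, Tmap_apply,
    Prod.mk_eq_zero, Prod.mk_eq_zero]

lemma Tmap_single (f : GaloisField p m → GaloisField p m) (x : K) :
    Tmap f (Pi.single x (1 : ZMod p)) = (1, x, f x) := by
  have hs : ∀ g : K → K, ∑ y, ((Pi.single x (1 : ZMod p) : K → ZMod p) y) • g y = g x := by
    intro g
    have he : ∀ y : K, ((Pi.single x (1 : ZMod p) : K → ZMod p) y) • g y
        = if y = x then g y else 0 := by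
      intro y
      rw [Pi.single_apply]
      by_cases h : y = x <;> simp [h]
    rw [Finset.sum_congr rfl fun y _ => he y]
    exact Fintype.sum_ite_eq' x g
  have h1 : ∑ y, Pi.single x (1 : ZMod p) y = 1 := by
    rw [Finset.sum_pi_single']
    simp
  rw [Tmap_apply, h1, hs, hs]

lemma Tmap_surj
    (hPN : ∀ a : GaloisField p m, a ≠ 0 → ∀ b : GaloisField p m,
      ∃! x : GaloisField p m, f (x + a) - f x = b)
    (hDO : ∀ x, f x = ∑ i : Fin m, ∑ j : Fin m, δ i j * x ^ (p ^ (i : ℕ) + p ^ (j : ℕ))) :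
    Function.Surjective (Tmap f) := by
  rw [← LinearMap.dualMap_injective_iff]
  rw [← LinearMap.ker_eq_bot, LinearMap.ker_eq_bot']
  intro φ hφ
  have hx : ∀ x : K, φ (1, x, f x) = 0 := by
    intro x
    have h := LinearMap.congr_fun hφ (Pi.single x (1 : ZMod p))
    rw [LinearMap.dualMap_apply, Tmap_single] at h
    simpa using h
  set ψ2 : K →ₗ[ZMod p] ZMod p :=
    φ ∘ₗ (LinearMap.inr (ZMod p) (ZMod p) (K × K)) ∘ₗ (LinearMap.inl (ZMod p) K K) with hψ2
  set ψ3 : K →ₗ[ZMod p] ZMod p :=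
    φ ∘ₗ (LinearMap.inr (ZMod p) (ZMod p) (K × K)) ∘ₗ (LinearMap.inr (ZMod p) K K) with hψ3
  obtain ⟨β, hβ⟩ := (LinearMap.BilinForm.toDual (Algebra.traceForm (ZMod p) K)
    (traceForm_nondegenerate (ZMod p) K)).surjective ψ2
  obtain ⟨γ, hγ⟩ := (LinearMap.BilinForm.toDual (Algebra.traceForm (ZMod p) K)
    (traceForm_nondegenerate (ZMod p) K)).surjective ψ3
  have hβ' : ∀ y : K, φ (0, y, 0) = tr p m (β * y) := by
    intro y
    have h := LinearMap.congr_fun hβ y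
    rw [LinearMap.BilinForm.toDual_def, Algebra.traceForm_apply] at h
    rw [hψ2] at h
    simpa [tr] using h.symm
  have hγ' : ∀ z : K, φ (0, 0, z) = tr p m (γ * z) := by
    intro z
    have h := LinearMap.congr_fun hγ z
    rw [LinearMap.BilinForm.toDual_def, Algebra.traceForm_apply] at h
    rw [hψ3] at h
    simpa [tr] using h.symm
  have hall : ∀ x : K, tr p m (γ * f x + β * x) + φ (1, 0, 0) = 0 := by
    intro x
    have e : ((1 : ZMod p), x, f x) =
        ((1 : ZMod p), (0 : K), (0 : K)) + ((0 : ZMod p), x, (0 : K))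
          + ((0 : ZMod p), (0 : K), f x) := by
      simp [Prod.ext_iff]
    have hxx := hx x
    rw [e, map_add, map_add, hβ' x, hγ' (f x)] at hxx
    rw [tr_add]
    linear_combination hxx
  obtain ⟨hγ0, hβ0, hc0⟩ := word_inj hPN hDO hall
  apply LinearMap.ext
  rintro ⟨c, y, z⟩
  have e : ((c : ZMod p), (y : K), (z : K)) =
      c • ((1 : ZMod p), (0 : K), (0 : K)) + (0, y, 0) + (0, 0, z) := by
    simp [Prod.ext_iff]
  rw [e, map_add, map_add, map_smul, hβ' y, hγ' z, hβ0, hγ0, hc0, zero_mul, zero_mul]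
  simp [tr]

/-! ### cardinality of the dual -/

lemma two_m_lt (hp : 5 ≤ p) (hm : 0 < m) : 2 * m + 1 ≤ p ^ m := by
  have h5 : ∀ n : ℕ, 2 * n + 1 ≤ 5 ^ n := by
    intro n
    induction n with
    | zero => norm_num
    | succ n ih =>
      have h1 : 0 < 5 ^ n := pow_pos (by norm_num) n
      rw [pow_succ]
      nlinarith
  calc 2 * m + 1 ≤ 5 ^ m := h5 m
    _ ≤ p ^ m := Nat.pow_le_pow_left hp m

lemma card_ker (hp : 5 ≤ p) (hm : 0 < m)
    (hPN : ∀ a : GaloisField p m, a ≠ 0 → ∀ b : GaloisField p m,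
      ∃! x : GaloisField p m, f (x + a) - f x = b)
    (hDO : ∀ x, f x = ∑ i : Fin m, ∑ j : Fin m, δ i j * x ^ (p ^ (i : ℕ) + p ^ (j : ℕ))) :
    Nat.card (LinearMap.ker (Tmap f)) = p ^ (p ^ m - 2 * m - 1) := by
  have hK : Nat.card K = p ^ m := GaloisField.card p m hm.ne'
  have hdom : Nat.card (K → ZMod p) = p ^ p ^ m := by
    rw [Nat.card_fun, Nat.card_zmod, hK]
  have hcod : Nat.card (ZMod p × K × K) = p ^ (2 * m + 1) := by
    rw [Nat.card_prod, Nat.card_prod, Nat.card_zmod, hK, pow_add, pow_mul]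
    ring
  have hquot : Nat.card ((K → ZMod p) ⧸ LinearMap.ker (Tmap f)) = p ^ (2 * m + 1) := by
    rw [← hcod]
    exact Nat.card_congr (LinearMap.quotKerEquivOfSurjective _ (Tmap_surj hPN hDO)).toEquiv
  have hmain := Submodule.card_eq_card_quotient_mul_card (LinearMap.ker (Tmap f))
  rw [hdom, hquot] at hmain
  have hle := two_m_lt hp hm
  have hsplit : p ^ p ^ m = p ^ (2 * m + 1) * p ^ (p ^ m - 2 * m - 1) := by
    rw [← pow_add]
    congr 1
    omega
  have hppos : 0 < p ^ (2 * m + 1) := pow_pos (Fact.out : p.Prime).pos _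
  refine Nat.eq_of_mul_eq_mul_right hppos ?_
  rw [← hmain, hsplit, mul_comm]

/-! ### minimum distance at least 4 -/

lemma low_weight
    (hPN : ∀ a : GaloisField p m, a ≠ 0 → ∀ b : GaloisField p m,
      ∃! x : GaloisField p m, f (x + a) - f x = b)
    (hDO : ∀ x, f x = ∑ i : Fin m, ∑ j : Fin m, δ i j * x ^ (p ^ (i : ℕ) + p ^ (j : ℕ)))
    {v : K → ZMod p}
    (h1 : ∑ x, v x = 0) (h2 : ∑ x, v x • x = 0) (h3 : ∑ x, v x • f x = 0)
    (hv : v ≠ 0) : 4 ≤ hammingNorm v := by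
  by_contra hlt
  push_neg at hlt
  set s : Finset K := Finset.univ.filter (fun x => v x ≠ 0) with hs
  have hmem : ∀ x, x ∈ s ↔ v x ≠ 0 := fun x => by simp [hs]
  have hcard3 : s.card ≤ 3 := by
    have hh : hammingNorm v = s.card := by
      rw [hammingNorm, hs]
    omega
  have hnonempty : s.Nonempty := by
    obtain ⟨x, hx⟩ := Function.ne_iff.mp hv
    exact ⟨x, (hmem x).mpr hx⟩
  have hzero : ∀ x, x ∉ s → v x = 0 := fun x hx =>
    not_not.mp fun hne => hx ((hmem x).mpr hne)
  have h1' : ∑ x ∈ s, v x = 0 := by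
    rw [Finset.sum_subset (Finset.subset_univ s) (fun x _ hx => hzero x hx), h1]
  have h2' : ∑ x ∈ s, v x • x = 0 := by
    rw [Finset.sum_subset (Finset.subset_univ s)
      (fun x _ hx => by rw [hzero x hx, zero_smul]), h2]
  have h3' : ∑ x ∈ s, v x • f x = 0 := by
    rw [Finset.sum_subset (Finset.subset_univ s)
      (fun x _ hx => by rw [hzero x hx, zero_smul]), h3]
  have hcases : s.card = 1 ∨ s.card = 2 ∨ s.card = 3 := by
    have := Finset.card_pos.mpr hnonempty
    omega
  obtain hcard | hcard | hcard := hcases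
  · obtain ⟨x1, hx1⟩ := Finset.card_eq_one.mp hcard
    rw [hx1, Finset.sum_singleton] at h1'
    exact (hmem x1).mp (by rw [hx1]; exact Finset.mem_singleton_self x1) h1'
  · obtain ⟨x1, x2, h12, hx⟩ := Finset.card_eq_two.mp hcard
    have ht1 : v x1 ≠ 0 := (hmem x1).mp (by rw [hx]; simp)
    rw [hx, Finset.sum_pair h12] at h1' h2'
    have hv2 : v x2 = -v x1 := by linear_combination h1'
    have hzz : v x1 • (x1 - x2) = 0 := by
      rw [smul_sub, ← h2', hv2, neg_smul]
      abel
    rcases smul_eq_zero.mp hzz with h0 | h0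
    · exact ht1 h0
    · exact h12 (sub_eq_zero.mp h0)
  · obtain ⟨x1, x2, x3, h12, h13, h23, hx⟩ := Finset.card_eq_three.mp hcard
    have ht1 : v x1 ≠ 0 := (hmem x1).mp (by rw [hx]; simp)
    have ht2 : v x2 ≠ 0 := (hmem x2).mp (by rw [hx]; simp)
    have ht3 : v x3 ≠ 0 := (hmem x3).mp (by rw [hx]; simp)
    have hsum3 : ∑ x ∈ ({x1, x2, x3} : Finset K), v x = v x1 + v x2 + v x3 := by
      rw [Finset.sum_insert (by simp [h12, h13]), Finset.sum_insert (by simp [h23]),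
        Finset.sum_singleton, add_assoc]
    have hsumK : ∀ (g : K → K), ∑ x ∈ ({x1, x2, x3} : Finset K), v x • g x
        = v x1 • g x1 + v x2 • g x2 + v x3 • g x3 := by
      intro g
      rw [Finset.sum_insert (by simp [h12, h13]), Finset.sum_insert (by simp [h23]),
        Finset.sum_singleton, add_assoc]
    rw [hx, hsum3] at h1'
    rw [hx, hsumK (fun x => x)] at h2'
    rw [hx, hsumK f] at h3'
    set u1 := algebraMap (ZMod p) K (v x1) with hu1def
    set u2 := algebraMap (ZMod p) K (v x2) with hu2def
    set u3 := algebraMap (ZMod p) K (v x3) with hu3def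
    have hinj := RingHom.injective (algebraMap (ZMod p) K)
    have hu1 : u1 ≠ 0 := fun h => ht1 (hinj (by rw [map_zero, ← hu1def]; exact h))
    have hu2 : u2 ≠ 0 := fun h => ht2 (hinj (by rw [map_zero, ← hu2def]; exact h))
    have hu3 : u3 ≠ 0 := fun h => ht3 (hinj (by rw [map_zero, ← hu3def]; exact h))
    have e1 : u1 + u2 + u3 = 0 := by
      rw [hu1def, hu2def, hu3def, ← map_add, ← map_add, h1', map_zero]
    have e2 : u1 * x1 + u2 * x2 + u3 * x3 = 0 := by
      rw [hu1def, hu2def, hu3def, ← Algebra.smul_def, ← Algebra.smul_def, ← Algebra.smul_def]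
      exact h2'
    have e3 : u1 * f x1 + u2 * f x2 + u3 * f x3 = 0 := by
      rw [hu1def, hu2def, hu3def, ← Algebra.smul_def, ← Algebra.smul_def, ← Algebra.smul_def]
      exact h3'
    set a : K := x1 - x3 with hadef
    have ha : a ≠ 0 := sub_ne_zero.mpr h13
    set s0 : ZMod p := -(v x1 * (v x2)⁻¹) with hs0def
    have hσ : algebraMap (ZMod p) K s0 = -(u1 * u2⁻¹) := by
      rw [hs0def, map_neg, map_mul, map_inv₀, hu1def, hu2def]
    have hσu2 : algebraMap (ZMod p) K s0 * u2 = -u1 := by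
      rw [hσ]
      field_simp
    have hkey : u1 * a + u2 * (x2 - x3) = 0 := by
      rw [hadef]
      linear_combination e2 - x3 * e1
    have hx2eq : x2 - x3 = s0 • a := by
      apply mul_left_cancel₀ hu2
      rw [Algebra.smul_def]
      linear_combination hkey - a * hσu2
    have hσ1 : algebraMap (ZMod p) K s0 ≠ 1 := by
      intro hone
      apply h12
      have h := hx2eq
      rw [Algebra.smul_def, hone, one_mul, hadef] at h
      exact (sub_left_inj.mp h).symm
    have hx1eq : x1 = x3 + a := by rw [hadef]; ring
    have hx2eq' : x2 = x3 + s0 • a := by rw [← hx2eq]; ring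
    rw [hx1eq, B_eq hDO] at e3
    rw [hx2eq', B_eq hDO, f_smul hDO, B_smul, Algebra.smul_def, Algebra.smul_def,
      map_mul] at e3
    have hfinal : u1 * (1 - algebraMap (ZMod p) K s0) * f a = 0 := by
      linear_combination e3 - f x3 * e1 - Bf δ x3 a * hσu2
        - algebraMap (ZMod p) K s0 * f a * hσu2
    rcases mul_eq_zero.mp hfinal with h0 | h0
    · rcases mul_eq_zero.mp h0 with h0 | h0
      · exact hu1 h0
      · exact hσ1 (by linear_combination -h0)
    · exact f_ne_zero hPN hDO ha h0

/-! ### a word of weight 4 -/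

lemma exists_weight4
    (hp : 5 ≤ p)
    (hDO : ∀ x, f x = ∑ i : Fin m, ∑ j : Fin m, δ i j * x ^ (p ^ (i : ℕ) + p ^ (j : ℕ))) :
    ∃ v ∈ pDual p m f, hammingNorm v = 4 := by
  have hcast : ∀ n : ℕ, 0 < n → n < 5 → ((n : K) ≠ 0) := by
    intro n hn1 hn2 h
    have hdvd := (CharP.cast_eq_zero_iff K p n).mp h
    have := Nat.le_of_dvd hn1 hdvd
    omega
  have hcastk : ∀ n : ℕ, 0 < n → n < 5 → ((n : ZMod p) ≠ 0) := by
    intro n hn1 hn2 h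
    have hdvd := (CharP.cast_eq_zero_iff (ZMod p) p n).mp h
    have := Nat.le_of_dvd hn1 hdvd
    omega
  have h10 : (1 : K) ≠ 0 := one_ne_zero
  have h20 : (2 : K) ≠ 0 := by
    have := hcast 2 (by norm_num) (by norm_num); push_cast at this; exact this
  have h30 : (3 : K) ≠ 0 := by
    have := hcast 3 (by norm_num) (by norm_num); push_cast at this; exact this
  have h21 : (2 : K) ≠ 1 := by
    intro h; exact h10 (by linear_combination h)
  have h31 : (3 : K) ≠ 1 := by
    intro h; exact h20 (by linear_combination h)
  have h32 : (3 : K) ≠ 2 := by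
    intro h; exact h10 (by linear_combination h)
  have hk10 : (1 : ZMod p) ≠ 0 := one_ne_zero
  have hk30 : (3 : ZMod p) ≠ 0 := by
    have := hcastk 3 (by norm_num) (by norm_num); push_cast at this; exact this
  set v : K → ZMod p := fun x =>
    if x = 0 then -1 else if x = 1 then 3 else if x = 2 then -3 else if x = 3 then 1 else 0
    with hvdef
  have hv0 : v 0 = -1 := by simp [hvdef]
  have hv1 : v 1 = 3 := by simp [hvdef, h10]
  have hv2 : v 2 = -3 := by simp [hvdef, h20, h21]
  have hv3 : v 3 = 1 := by simp [hvdef, h30, h31, h32]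
  have hvother : ∀ x : K, x ≠ 0 → x ≠ 1 → x ≠ 2 → x ≠ 3 → v x = 0 := by
    intro x e0 e1 e2 e3
    simp [hvdef, e0, e1, e2, e3]
  have hnotmem0 : (0 : K) ∉ ({1, 2, 3} : Finset K) := by
    simp [Ne.symm h10, Ne.symm h20, Ne.symm h30]
  have hnotmem1 : (1 : K) ∉ ({2, 3} : Finset K) := by
    simp [Ne.symm h21, Ne.symm h31]
  have hnotmem2 : (2 : K) ∉ ({3} : Finset K) := by
    simp [Ne.symm h32]
  have hS : ∀ (g : K → K), ∑ x, v x • g x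
      = v 0 • g 0 + v 1 • g 1 + v 2 • g 2 + v 3 • g 3 := by
    intro g
    rw [← Finset.sum_subset (Finset.subset_univ ({0, 1, 2, 3} : Finset K))
      (fun x _ hx => ?_)]
    · rw [Finset.sum_insert hnotmem0, Finset.sum_insert hnotmem1,
        Finset.sum_insert hnotmem2, Finset.sum_singleton]
      ring
    · simp only [Finset.mem_insert, Finset.mem_singleton, not_or] at hx
      rw [hvother x hx.1 hx.2.1 hx.2.2.1 hx.2.2.2, zero_smul]
  have hsum1 : ∑ x, v x = 0 := by
    rw [← Finset.sum_subset (Finset.subset_univ ({0, 1, 2, 3} : Finset K))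
      (fun x _ hx => ?_)]
    · rw [Finset.sum_insert hnotmem0, Finset.sum_insert hnotmem1,
        Finset.sum_insert hnotmem2, Finset.sum_singleton, hv0, hv1, hv2, hv3]
      ring
    · simp only [Finset.mem_insert, Finset.mem_singleton, not_or] at hx
      exact hvother x hx.1 hx.2.1 hx.2.2.1 hx.2.2.2
  have hsum2 : ∑ x, v x • x = 0 := by
    rw [hS (fun x => x), hv0, hv1, hv2, hv3]
    rw [Algebra.smul_def, Algebra.smul_def, Algebra.smul_def, Algebra.smul_def,
      map_neg, map_one, map_ofNat, map_neg, map_ofNat]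
    norm_num
  have h2eq : (2 : K) = (2 : ZMod p) • (1 : K) := by
    rw [Algebra.smul_def, mul_one, map_ofNat]
  have h3eq : (3 : K) = (3 : ZMod p) • (1 : K) := by
    rw [Algebra.smul_def, mul_one, map_ofNat]
  have hsum3 : ∑ x, v x • f x = 0 := by
    rw [hS f, hv0, hv1, hv2, hv3, f_zero hDO, smul_zero, h2eq, h3eq,
      f_smul hDO, f_smul hDO, smul_smul, smul_smul]
    rw [zero_add, ← add_smul, ← add_smul]
    have hco : (3 + -3 * (2 * 2) + 1 * (3 * 3) : ZMod p) = 0 := by norm_num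
    rw [hco, zero_smul]
  refine ⟨v, ?_, ?_⟩
  · rw [mem_pDual_iff]
    exact ⟨hsum1, hsum2, hsum3⟩
  · have hfilt : (Finset.univ.filter fun x => v x ≠ 0) = ({0, 1, 2, 3} : Finset K) := by
      ext x
      simp only [Finset.mem_filter, Finset.mem_univ, true_and, Finset.mem_insert,
        Finset.mem_singleton]
      constructor
      · intro hne
        by_contra hcon
        push_neg at hcon
        exact hne (hvother x hcon.1 hcon.2.1 hcon.2.2.1 hcon.2.2.2)
      · rintro (rfl | rfl | rfl | rfl)
        · rw [hv0]; exact neg_ne_zero.mpr hk10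
        · rw [hv1]; exact hk30
        · rw [hv2]; exact neg_ne_zero.mpr hk30
        · rw [hv3]; exact hk10
    show (Finset.univ.filter fun x => v x ≠ 0).card = 4
    rw [hfilt, Finset.card_insert_of_notMem hnotmem0,
      Finset.card_insert_of_notMem hnotmem1,
      Finset.card_insert_of_notMem hnotmem2, Finset.card_singleton]

end Stmt11Aux

/-- For a prime `p ≥ 5`, `m ≥ 1` and `f` a PN-DO function on `F_{p^m}`,
the dual `C̄_f^⊥` of the punctured code is a `[p^m, p^m−2m−1, 4]` code over `F_p`:
it has `p^(p^m−2m−1)` elements (dimension `p^m − 2m − 1`) and minimum Hamming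
distance exactly `4`. -/
theorem stmt_11 (p m : ℕ) [Fact p.Prime] (hp : 5 ≤ p) (hm : 0 < m)
    (f : GaloisField p m → GaloisField p m)
    (hPN : ∀ a : GaloisField p m, a ≠ 0 → ∀ b : GaloisField p m,
      ∃! x : GaloisField p m, f (x + a) - f x = b)
    (δ : Fin m → Fin m → GaloisField p m)
    (hDO : ∀ x, f x = ∑ i : Fin m, ∑ j : Fin m, δ i j * x ^ (p ^ (i : ℕ) + p ^ (j : ℕ))) :
    Set.ncard (pDual p m f) = p ^ (p ^ m - 2 * m - 1) ∧
    (∀ v ∈ pDual p m f, v ≠ 0 → 4 ≤ hammingNorm v) ∧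
    (∃ v ∈ pDual p m f, hammingNorm v = 4) := by
  refine ⟨?_, ?_, ?_⟩
  · rw [Stmt11Aux.pDual_eq_ker, ← Nat.card_coe_set_eq]
    exact Stmt11Aux.card_ker hp hm hPN hDO
  · intro v hv hv0
    rw [Stmt11Aux.mem_pDual_iff] at hv
    exact Stmt11Aux.low_weight hPN hDO hv.1 hv.2.1 hv.2.2 hv0
  · exact Stmt11Aux.exists_weight4 hp hDO
end
end
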